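/- Let g ≥ 2 and F = (λ, f) ∈ GT. Then in Γ̂_{g,1}: (i) d^λ · (y₅^λ d^λ y₅^{-λ}) = w₄^λ, i.e. the proposed action of F respects relation (B); (ii) d^λ commutes with a₁^λ and with f(a_j², y_j) a_j^λ f(y_j, a_j²) for every 2 ≤ j ≤ 2g with j ≠ 4, i.e. the proposed action respects the commutation of d with a_j for j ≠ 4. -/

import Mathlib

/-! # Common setup: profinite groups, Ẑ, free profinite F₂, profinite completions,
the Grothendieck–Teichmüller group, braid groups and mapping class groups. -/

universe u

/-- A (topological) group is profinite if it is a compact, Hausdorff, totally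
disconnected topological group. -/
class IsProfiniteGroup (G : Type) [Group G] [TopologicalSpace G] extends
    IsTopologicalGroup G, CompactSpace G, T2Space G, TotallyDisconnectedSpace G : Prop

/-- A model of Ẑ, the profinite completion of ℤ: a profinite commutative topological
ring whose underlying additive profinite group is the free profinite group on the
single (topological) generator `1`. These properties characterize Ẑ uniquely. -/
structure ZhatModel : Type 1 where
  R : Type
  [commRing : CommRing R]
  [top : TopologicalSpace R]
  [topRing : IsTopologicalRing R]
  [cpt : CompactSpace R]
  [t2 : T2Space R]
  [td : TotallyDisconnectedSpace R]
  free : ∀ (G : Type) [Group G] [TopologicalSpace G] [IsProfiniteGroup G] (a : G),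
    ∃! φ : ContinuousMonoidHom (Multiplicative R) G,
      φ (Multiplicative.ofAdd (1 : R)) = a

attribute [instance] ZhatModel.commRing ZhatModel.top ZhatModel.topRing
  ZhatModel.cpt ZhatModel.t2 ZhatModel.td

/-- `Z.pow a l` is the profinite power `a ^ l` for `l ∈ Ẑ`: the image of `l` under
the unique continuous homomorphism `Ẑ → G` sending `1` to `a`. -/
noncomputable def ZhatModel.pow (Z : ZhatModel) {G : Type} [Group G] [TopologicalSpace G]
    [IsProfiniteGroup G] (a : G) (l : Z.R) : G :=
  (Z.free G a).exists.choose (Multiplicative.ofAdd l)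

/-- A model of the free profinite group `F̂₂` on two generators `x`, `y`. -/
structure F2Model : Type 1 where
  F : Type
  [grp : Group F]
  [top : TopologicalSpace F]
  [pro : IsProfiniteGroup F]
  x : F
  y : F
  free : ∀ (G : Type) [Group G] [TopologicalSpace G] [IsProfiniteGroup G] (a b : G),
    ∃! φ : ContinuousMonoidHom F G, φ x = a ∧ φ y = b

attribute [instance] F2Model.grp F2Model.top F2Model.pro

/-- `F2.eval f a b` is `f(a,b)`: the image of `f ∈ F̂₂` under the unique continuous
homomorphism `F̂₂ → G` with `x ↦ a`, `y ↦ b`. -/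
noncomputable def F2Model.eval (F2 : F2Model) {G : Type} [Group G] [TopologicalSpace G]
    [IsProfiniteGroup G] (f : F2.F) (a b : G) : G :=
  (F2.free G a b).exists.choose f

/-- A model of the profinite completion of a (discrete) group `B`: a profinite group
`C` together with a homomorphism `ι : B → C` such that every homomorphism from `B`
to a profinite group extends uniquely to a continuous homomorphism on `C`.  This
universal property characterizes the profinite completion uniquely. -/
structure ProfiniteCompletionModel (B : Type) [Group B] : Type 1 where
  C : Type
  [grp : Group C]
  [top : TopologicalSpace C]
  [pro : IsProfiniteGroup C]
  ι : B →* C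
  free : ∀ (H : Type) [Group H] [TopologicalSpace H] [IsProfiniteGroup H] (ψ : B →* H),
    ∃! φ : ContinuousMonoidHom C H, ∀ b, φ (ι b) = ψ b

attribute [instance] ProfiniteCompletionModel.grp ProfiniteCompletionModel.top
  ProfiniteCompletionModel.pro

/-! ## Generic words in a group -/

section Words

variable {G : Type*} [Group G]

/-- `genY b k = b (k-1) ⋯ b 2 (b 1)² b 2 ⋯ b (k-1)` (equal to `1` for `k ≤ 1`). -/
def genY (b : ℕ → G) : ℕ → G
  | 0 => 1
  | 1 => 1
  | 2 => b 1 * b 1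
  | (k+3) => b (k+2) * genY b (k+2) * b (k+2)

/-- `genProd b k = b 1 * b 2 * ⋯ * b k`. -/
def genProd (b : ℕ → G) : ℕ → G
  | 0 => 1
  | (k+1) => genProd b k * b (k+1)

/-- `genW b k = (b 1 ⋯ b (k-1))^k`. -/
def genW (b : ℕ → G) (k : ℕ) : G := (genProd b (k-1))^k

end Words

/-! ## Braid groups -/

/-- Braid relations on `n` generators (indexed by `Fin n`, where index `i`
stands for `σ_{i+1}`). -/
def braidRels (n : ℕ) : Set (FreeGroup (Fin n)) :=
  {r | (∃ i j : Fin n, (i : ℕ) + 1 = (j : ℕ) ∧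
          r = FreeGroup.of i * FreeGroup.of j * FreeGroup.of i *
              (FreeGroup.of j * FreeGroup.of i * FreeGroup.of j)⁻¹) ∨
       (∃ i j : Fin n, (i : ℕ) + 2 ≤ (j : ℕ) ∧
          r = FreeGroup.of i * FreeGroup.of j * (FreeGroup.of j * FreeGroup.of i)⁻¹)}

/-- The Artin braid group `B_n` on `n` strands, with the `n-1` generators
`σ_1, …, σ_{n-1}`. -/
abbrev BraidGroup (n : ℕ) : Type := PresentedGroup (braidRels (n-1))

/-- The generator `σ_i` of the braid group `B_n` (junk value `1` when `i` is
out of range). -/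
def σB (n : ℕ) (i : ℕ) : BraidGroup n :=
  if h : 1 ≤ i ∧ i < n then PresentedGroup.of (⟨i - 1, by omega⟩ : Fin (n-1)) else 1

/-- `η_i = σ_{i-1} ⋯ σ₂ σ₁² σ₂ ⋯ σ_{i-1}` in `B_n`. -/
def ηB (n : ℕ) (i : ℕ) : BraidGroup n := genY (σB n) i

/-- `ω_i = (σ₁ ⋯ σ_{i-1})^i` in `B_n`. -/
def ωB (n : ℕ) (i : ℕ) : BraidGroup n := genW (σB n) i

/-! ## The Grothendieck-Teichmüller group -/

/-- The standard generators of the pure braid group `P₄ ⊂ B₄`, in the order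
`x₁₂, x₁₃, x₁₄, x₂₃, x₂₄, x₃₄`. -/
def xGen : Fin 6 → BraidGroup 4 :=
  ![(σB 4 1)^2,
    σB 4 2 * (σB 4 1)^2 * (σB 4 2)⁻¹,
    σB 4 3 * σB 4 2 * (σB 4 1)^2 * (σB 4 2)⁻¹ * (σB 4 3)⁻¹,
    (σB 4 2)^2,
    σB 4 3 * (σB 4 2)^2 * (σB 4 3)⁻¹,
    (σB 4 3)^2]

/-- The pure braid group `P₄` as a subgroup of `B₄`. -/
def P4 : Subgroup (BraidGroup 4) := Subgroup.closure (Set.range xGen)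

/-- The generators `x_{ij}` as elements of `P₄`. -/
def xP (k : Fin 6) : P4 := ⟨xGen k, Subgroup.subset_closure (Set.mem_range_self k)⟩

/-- The pair `(l, f)` belongs to the Grothendieck–Teichmüller group `GT`:
`l ∈ Ẑ×`, `l - 1 ∈ 2Ẑ`, `f` lies in the closure of the commutator subgroup of
`F̂₂` and the relations (I), (II), (III) hold. -/
def IsGT (Z : ZhatModel) (F2 : F2Model) (l : Z.R) (f : F2.F) : Prop :=
  IsUnit l ∧ (∃ m : Z.R, l - 1 = 2 * m) ∧
  f ∈ (commutator F2.F).topologicalClosure ∧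
  -- (I)
  F2.eval f F2.x F2.y * F2.eval f F2.y F2.x = 1 ∧
  -- (II)
  (∀ m : Z.R, l - 1 = 2 * m →
    F2.eval f (F2.x * F2.y)⁻¹ F2.x * Z.pow ((F2.x * F2.y)⁻¹) m *
      F2.eval f F2.y ((F2.x * F2.y)⁻¹) * Z.pow F2.y m *
      F2.eval f F2.x F2.y * Z.pow F2.x m = 1) ∧
  -- (III), in (any model of) the profinite completion of the pure braid group P₄
  (∀ CP : ProfiniteCompletionModel P4,
    F2.eval f (CP.ι (xP 0)) (CP.ι (xP 3) * CP.ι (xP 4)) *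
      F2.eval f (CP.ι (xP 1) * CP.ι (xP 3)) (CP.ι (xP 5)) =
    F2.eval f (CP.ι (xP 3)) (CP.ι (xP 5)) *
      F2.eval f (CP.ι (xP 0) * CP.ι (xP 1)) (CP.ι (xP 4) * CP.ι (xP 5)) *
      F2.eval f (CP.ι (xP 0)) (CP.ι (xP 3)))
/-! ## Words for the mapping class group -/

section MCGWords

variable {G : Type*} [Group G] (d : G) (a : ℕ → G)

/-- `t_k = a_{2k} a_{2k-1} a_{2k+1} a_{2k}`. -/
def tA (k : ℕ) : G := a (2*k) * a (2*k - 1) * a (2*k + 1) * a (2*k)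

/-- `d' = y₅ d y₅⁻¹`. -/
def dpA : G := genY a 5 * d * (genY a 5)⁻¹

/-- `d₃ = (t₁⁻¹t₂⁻¹ d t₂t₁)(t₂⁻¹ d t₂) d a₁⁻¹ a₃⁻¹ a₅⁻¹`. -/
def d3A : G :=
  ((tA a 1)⁻¹ * (tA a 2)⁻¹ * d * tA a 2 * tA a 1) * ((tA a 2)⁻¹ * d * tA a 2) * d *
    (a 1)⁻¹ * (a 3)⁻¹ * (a 5)⁻¹

/-- The element `t₂t₁t₃t₂`. -/
def tfour : G := tA a 2 * tA a 1 * tA a 3 * tA a 2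

/-- The relator expressing relation (C'): `d'` commutes with `(t₂t₁t₃t₂) d (t₂t₁t₃t₂)⁻¹`. -/
def relCpA : G :=
  dpA d a * (tfour a * d * (tfour a)⁻¹) * (dpA d a)⁻¹ * (tfour a * d * (tfour a)⁻¹)⁻¹

/-- `v₁ = d'`, `v_i = (t_{i-1} t_i) v_{i-1} (t_{i-1} t_i)⁻¹`. -/
def vA : ℕ → G
  | 0 => 1
  | 1 => dpA d a
  | (i+2) => (tA a (i+1) * tA a (i+2)) * vA (i+1) * (tA a (i+1) * tA a (i+2))⁻¹

/-- `u_i = a_{2i} a_{2i+1} a_{2i+2} v_i (a_{2i+2} a_{2i+1} a_{2i} a_{2i-1})⁻¹`. -/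
def uA (i : ℕ) : G :=
  a (2*i) * a (2*i+1) * a (2*i+2) * vA d a i *
    (a (2*i+2) * a (2*i+1) * a (2*i) * a (2*i - 1))⁻¹

/-- `d_g = (u₁⋯u_{g-1})⁻¹ a₁ (u₁⋯u_{g-1})`. -/
def dgA (g : ℕ) : G :=
  (genProd (uA d a) (g-1))⁻¹ * a 1 * genProd (uA d a) (g-1)

/-- The relator of relation (D): `y_{2g+1} d_g y_{2g+1}⁻¹ = d_g`. -/
def relDA (g : ℕ) : G :=
  genY a (2*g+1) * dgA d a g * (genY a (2*g+1))⁻¹ * (dgA d a g)⁻¹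

/-- `genProd2 b k = b 2 * b 3 * ⋯ * b k`. -/
def genProd2 (b : ℕ → G) : ℕ → G
  | 0 => 1
  | 1 => 1
  | (k+2) => genProd2 b (k+1) * b (k+2)

/-- `TTA a i = (t₂⋯t_i)·(t₁⋯t_{i-1})`. -/
def TTA (i : ℕ) : G := genProd2 (tA a) i * genProd (tA a) (i-1)

/-- The sequence `d₁ = a₁`, `d₂ = d`,
`d_{i+1} = a_{2i+1}⁻¹ a_{2i-1}⁻¹ d_{i-1}⁻¹ g_{2,i} g_{1,i} d_i`
where `g_{1,i} = t_i⁻¹ d_i t_i` and `g_{2,i} = (t₂⋯t_i t₁⋯t_{i-1})⁻¹ d (t₂⋯t_i t₁⋯t_{i-1})`. -/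
def dSeq : ℕ → G
  | 0 => 1
  | 1 => a 1
  | 2 => d
  | (i+3) =>
    (a (2*(i+2)+1))⁻¹ * (a (2*(i+2) - 1))⁻¹ * (dSeq (i+1))⁻¹ *
      ((TTA a (i+2))⁻¹ * d * TTA a (i+2)) *
      ((tA a (i+2))⁻¹ * dSeq (i+2) * tA a (i+2)) * dSeq (i+2)

/-- `g_{1,i} = t_i⁻¹ d_i t_i`. -/
def g1A (i : ℕ) : G := (tA a i)⁻¹ * dSeq d a i * tA a i

/-- `g_{2,i} = (t₂⋯t_i · t₁⋯t_{i-1})⁻¹ d (t₂⋯t_i · t₁⋯t_{i-1})`. -/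
def g2A (i : ℕ) : G := (TTA a i)⁻¹ * d * TTA a i

/-- `d′_i = y_{2i+1} d_i y_{2i+1}⁻¹`. -/
def dpSeq (i : ℕ) : G := genY a (2*i+1) * dSeq d a i * (genY a (2*i+1))⁻¹

/-- `g′_{1,i} = t_i⁻¹ d′_i t_i`. -/
def g1pA (i : ℕ) : G := (tA a i)⁻¹ * dpSeq d a i * tA a i

/-- `g′_{2,i} = (t₂⋯t_i · t₁⋯t_{i-1})⁻¹ d′ (t₂⋯t_i · t₁⋯t_{i-1})`. -/
def g2pA (i : ℕ) : G := (TTA a i)⁻¹ * dpA d a * TTA a i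

/-- `W_k = (t₁⋯t_{k-1})^k`. -/
def WWA (k : ℕ) : G := genW (tA a) k

/-- `Y_k = t_{k-1}⋯t₂t₁²t₂⋯t_{k-1}`. -/
def YYA (k : ℕ) : G := genY (tA a) k

end MCGWords

/-! ## The Wajnryb presentation of the mapping class group `Γ_{g,1}` -/

/-- The free-group generator `d`. -/
def dF (g : ℕ) : FreeGroup (Fin (2*g+1)) := FreeGroup.of ⟨0, by omega⟩

/-- The free-group generators `a_i`, `1 ≤ i ≤ 2g` (junk value `1` out of range). -/
def aF (g : ℕ) (i : ℕ) : FreeGroup (Fin (2*g+1)) :=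
  if h : 1 ≤ i ∧ i ≤ 2*g then FreeGroup.of ⟨i, by omega⟩ else 1

/-- The relators of the Wajnryb presentation of `Γ_{g,1}`: relations (A), (B),
(C) (when `g ≥ 3`) and (C') (when `g ≥ 4`). -/
def mcgRels (g : ℕ) : Set (FreeGroup (Fin (2*g+1))) :=
  {r | (∃ i : ℕ, 1 ≤ i ∧ i + 1 ≤ 2*g ∧
          r = aF g i * aF g (i+1) * aF g i * (aF g (i+1) * aF g i * aF g (i+1))⁻¹) ∨
       (∃ i j : ℕ, 1 ≤ i ∧ j ≤ 2*g ∧ i + 2 ≤ j ∧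
          r = aF g i * aF g j * (aF g j * aF g i)⁻¹) ∨
       (r = dF g * aF g 4 * dF g * (aF g 4 * dF g * aF g 4)⁻¹) ∨
       (∃ j : ℕ, 1 ≤ j ∧ j ≤ 2*g ∧ j ≠ 4 ∧
          r = dF g * aF g j * (aF g j * dF g)⁻¹) ∨
       (r = dF g * dpA (dF g) (aF g) * ((aF g 1 * aF g 2 * aF g 3)^4)⁻¹) ∨
       (3 ≤ g ∧ r = d3A (dF g) (aF g) * aF g 6 * d3A (dF g) (aF g) *
          (aF g 6 * d3A (dF g) (aF g) * aF g 6)⁻¹) ∨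
       (4 ≤ g ∧ r = relCpA (dF g) (aF g))}

/-- The mapping class group `Γ_{g,1}` of a genus-`g` surface with one marked point,
via its Wajnryb presentation. -/
abbrev Gamma1 (g : ℕ) : Type := PresentedGroup (mcgRels g)

/-- The generator `d` of `Γ_{g,1}`. -/
def dM (g : ℕ) : Gamma1 g := PresentedGroup.of ⟨0, by omega⟩

/-- The generators `a_i` of `Γ_{g,1}` (junk value `1` out of range). -/
def aM (g : ℕ) (i : ℕ) : Gamma1 g :=
  if h : 1 ≤ i ∧ i ≤ 2*g then PresentedGroup.of ⟨i, by omega⟩ else 1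

/-- The mapping class group `Γ_{g,0}` of a closed genus-`g` surface, obtained from the
Wajnryb presentation of `Γ_{g,1}` by adding the single relation (D). -/
abbrev Gamma0 (g : ℕ) : Type :=
  PresentedGroup (mcgRels g ∪ {relDA (dF g) (aF g) g})

/-- The generator `d` of `Γ_{g,0}`. -/
def dM0 (g : ℕ) : Gamma0 g := PresentedGroup.of ⟨0, by omega⟩

/-- The generators `a_i` of `Γ_{g,0}` (junk value `1` out of range). -/
def aM0 (g : ℕ) (i : ℕ) : Gamma0 g :=
  if h : 1 ≤ i ∧ i ≤ 2*g then PresentedGroup.of ⟨i, by omega⟩ else 1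


/-! ## Auxiliary infrastructure -/

section ProfiniteSub

variable {G : Type} [Group G] [TopologicalSpace G] [IsProfiniteGroup G]

lemma isProfiniteGroup_closed_subgroup (H : Subgroup G) (h : IsClosed (H : Set G)) :
    IsProfiniteGroup ↥H := by
  haveI : CompactSpace ↥H := isCompact_iff_compactSpace.mp h.isCompact
  constructor

end ProfiniteSub

namespace ZhatModel

variable (Z : ZhatModel) {G : Type} [Group G] [TopologicalSpace G] [IsProfiniteGroup G]

/-- The canonical continuous homomorphism `Ẑ → G` sending `1` to `a`. -/
noncomputable def powHom (a : G) : ContinuousMonoidHom (Multiplicative Z.R) G :=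
  (Z.free G a).exists.choose

lemma powHom_apply (a : G) (t : Z.R) :
    Z.powHom a (Multiplicative.ofAdd t) = Z.pow a t := rfl

lemma powHom_one (a : G) : Z.powHom a (Multiplicative.ofAdd (1 : Z.R)) = a :=
  (Z.free G a).exists.choose_spec

lemma pow_eq (a : G) (ψ : ContinuousMonoidHom (Multiplicative Z.R) G)
    (h : ψ (Multiplicative.ofAdd (1 : Z.R)) = a) (t : Z.R) :
    Z.pow a t = ψ (Multiplicative.ofAdd t) := by
  have h2 : Z.powHom a = ψ := (Z.free G a).unique (Z.powHom_one a) h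
  rw [← Z.powHom_apply a t, h2]

lemma zpow_one (a : G) : Z.pow a 1 = a := Z.powHom_one a

lemma zpow_zero (a : G) : Z.pow a 0 = 1 := map_one (Z.powHom a)

lemma zpow_add (a : G) (s t : Z.R) : Z.pow a (s + t) = Z.pow a s * Z.pow a t := by
  rw [← Z.powHom_apply, ← Z.powHom_apply, ← Z.powHom_apply, ← map_mul, ← ofAdd_add]

lemma zpow_neg (a : G) (t : Z.R) : Z.pow a (-t) = (Z.pow a t)⁻¹ := by
  rw [← Z.powHom_apply, ← Z.powHom_apply, ← map_inv, ← ofAdd_neg]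

lemma conj_pow (a g : G) (t : Z.R) : g * Z.pow a t * g⁻¹ = Z.pow (g * a * g⁻¹) t := by
  let ψ : ContinuousMonoidHom (Multiplicative Z.R) G :=
    { toFun := fun s => g * Z.pow a s.toAdd * g⁻¹
      map_one' := by
        show g * Z.pow a (0 : Z.R) * g⁻¹ = 1
        rw [Z.zpow_zero]; group
      map_mul' := by
        intro x y
        show g * Z.pow a (x.toAdd + y.toAdd) * g⁻¹ =
          (g * Z.pow a x.toAdd * g⁻¹) * (g * Z.pow a y.toAdd * g⁻¹)
        rw [Z.zpow_add]; group
      continuous_toFun :=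
        (continuous_const.mul (map_continuous (Z.powHom a))).mul continuous_const }
  have h1 : ψ (Multiplicative.ofAdd (1 : Z.R)) = g * a * g⁻¹ := by
    show g * Z.pow a (1 : Z.R) * g⁻¹ = _
    rw [Z.zpow_one]
  have h2 := Z.pow_eq (g * a * g⁻¹) ψ h1 t
  have h3 : ψ (Multiplicative.ofAdd t) = g * Z.pow a t * g⁻¹ := rfl
  rw [h2, h3]

lemma pow_comm_left (a g : G) (h : a * g = g * a) (t : Z.R) :
    Z.pow a t * g = g * Z.pow a t := by
  have h1 : g * a * g⁻¹ = a := by rw [← h]; group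
  have h2 := Z.conj_pow a g t
  rw [h1] at h2
  calc Z.pow a t * g = (g * Z.pow a t * g⁻¹) * g := by rw [h2]
    _ = g * Z.pow a t := by group

lemma pow_pow_comm (a b : G) (h : a * b = b * a) (s t : Z.R) :
    Z.pow a s * Z.pow b t = Z.pow b t * Z.pow a s := by
  have h1 : b * Z.pow a s = Z.pow a s * b := (Z.pow_comm_left a b h s).symm
  exact (Z.pow_comm_left b (Z.pow a s) h1 t).symm

lemma pow_inv (a : G) (t : Z.R) : Z.pow a⁻¹ t = (Z.pow a t)⁻¹ := by
  let ψ : ContinuousMonoidHom (Multiplicative Z.R) G :=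
    { toFun := fun s => (Z.pow a s.toAdd)⁻¹
      map_one' := by
        show (Z.pow a (0 : Z.R))⁻¹ = 1
        rw [Z.zpow_zero]; group
      map_mul' := by
        intro x y
        have c : Z.pow a x.toAdd * Z.pow a y.toAdd = Z.pow a y.toAdd * Z.pow a x.toAdd := by
          rw [← Z.zpow_add, ← Z.zpow_add, add_comm]
        show (Z.pow a (x.toAdd + y.toAdd))⁻¹ = (Z.pow a x.toAdd)⁻¹ * (Z.pow a y.toAdd)⁻¹
        rw [Z.zpow_add, c]; group
      continuous_toFun := (map_continuous (Z.powHom a)).inv }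
  have h1 : ψ (Multiplicative.ofAdd (1 : Z.R)) = a⁻¹ := by
    show (Z.pow a (1 : Z.R))⁻¹ = a⁻¹
    rw [Z.zpow_one]
  have h2 := Z.pow_eq a⁻¹ ψ h1 t
  have h3 : ψ (Multiplicative.ofAdd t) = (Z.pow a t)⁻¹ := rfl
  rw [h2, h3]

lemma pow_mul_distrib (a b : G) (h : a * b = b * a) (t : Z.R) :
    Z.pow (a * b) t = Z.pow a t * Z.pow b t := by
  let ψ : ContinuousMonoidHom (Multiplicative Z.R) G :=
    { toFun := fun s => Z.pow a s.toAdd * Z.pow b s.toAdd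
      map_one' := by
        show Z.pow a (0 : Z.R) * Z.pow b (0 : Z.R) = 1
        rw [Z.zpow_zero, Z.zpow_zero]; group
      map_mul' := by
        intro x y
        have c : Z.pow b x.toAdd * Z.pow a y.toAdd = Z.pow a y.toAdd * Z.pow b x.toAdd :=
          Z.pow_pow_comm b a h.symm _ _
        show Z.pow a (x.toAdd + y.toAdd) * Z.pow b (x.toAdd + y.toAdd) =
          (Z.pow a x.toAdd * Z.pow b x.toAdd) * (Z.pow a y.toAdd * Z.pow b y.toAdd)
        rw [Z.zpow_add, Z.zpow_add]
        calc Z.pow a x.toAdd * Z.pow a y.toAdd * (Z.pow b x.toAdd * Z.pow b y.toAdd)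
            = Z.pow a x.toAdd * (Z.pow a y.toAdd * Z.pow b x.toAdd) * Z.pow b y.toAdd := by
              group
          _ = Z.pow a x.toAdd * (Z.pow b x.toAdd * Z.pow a y.toAdd) * Z.pow b y.toAdd := by
              rw [← c]
          _ = Z.pow a x.toAdd * Z.pow b x.toAdd * (Z.pow a y.toAdd * Z.pow b y.toAdd) := by
              group
      continuous_toFun := (map_continuous (Z.powHom a)).mul (map_continuous (Z.powHom b)) }
  have h1 : ψ (Multiplicative.ofAdd (1 : Z.R)) = a * b := by
    show Z.pow a (1 : Z.R) * Z.pow b (1 : Z.R) = a * b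
    rw [Z.zpow_one, Z.zpow_one]
  have h2 := Z.pow_eq (a * b) ψ h1 t
  have h3 : ψ (Multiplicative.ofAdd t) = Z.pow a t * Z.pow b t := rfl
  rw [h2, h3]

lemma pow_two_mul (a : G) (m : Z.R) : Z.pow a (2 * m) = Z.pow (a * a) m := by
  let ψ : ContinuousMonoidHom (Multiplicative Z.R) G :=
    { toFun := fun s => Z.pow a (2 * s.toAdd)
      map_one' := by
        show Z.pow a (2 * (0 : Z.R)) = 1
        rw [mul_zero, Z.zpow_zero]
      map_mul' := by
        intro x y
        show Z.pow a (2 * (x.toAdd + y.toAdd)) = Z.pow a (2 * x.toAdd) * Z.pow a (2 * y.toAdd)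
        rw [mul_add, Z.zpow_add]
      continuous_toFun := (map_continuous (Z.powHom a)).comp
        (continuous_ofAdd.comp (continuous_const.mul continuous_toAdd)) }
  have h1 : ψ (Multiplicative.ofAdd (1 : Z.R)) = a * a := by
    show Z.pow a (2 * (1 : Z.R)) = a * a
    have h2 : (2 : Z.R) * 1 = 1 + 1 := by ring
    rw [h2, Z.zpow_add, Z.zpow_one]
  have h2 := Z.pow_eq (a * a) ψ h1 m
  have h3 : ψ (Multiplicative.ofAdd m) = Z.pow a (2 * m) := rfl
  rw [h2, h3]

lemma pow_conj_aux (u d w : G) (hu : u * d * u⁻¹ = d⁻¹ * w) (hdw : d * w = w * d) (t : Z.R) :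
    u * Z.pow d t * u⁻¹ = Z.pow (w * (d * d)⁻¹) t * Z.pow d t := by
  set z := w * (d * d)⁻¹ with hz
  have h' : w * d⁻¹ = d⁻¹ * w := by
    have h1 : d * (w * d⁻¹) = d * (d⁻¹ * w) := by rw [← mul_assoc, hdw]; group
    exact mul_left_cancel h1
  have e1 : z * d = w * d⁻¹ := by rw [hz]; group
  have e2 : d * z = w * d⁻¹ := by
    rw [hz]
    calc d * (w * (d * d)⁻¹) = (d * w) * (d * d)⁻¹ := by group
      _ = (w * d) * (d * d)⁻¹ := by rw [hdw]
      _ = w * d⁻¹ := by group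
  have hzd : z * d = d * z := e1.trans e2.symm
  let ψ : ContinuousMonoidHom (Multiplicative Z.R) G :=
    { toFun := fun s => u⁻¹ * (Z.pow z s.toAdd * Z.pow d s.toAdd) * u
      map_one' := by
        show u⁻¹ * (Z.pow z (0 : Z.R) * Z.pow d (0 : Z.R)) * u = 1
        rw [Z.zpow_zero, Z.zpow_zero]; group
      map_mul' := by
        intro x y
        have c' : Z.pow z y.toAdd * Z.pow d x.toAdd = Z.pow d x.toAdd * Z.pow z y.toAdd :=
          Z.pow_pow_comm z d hzd _ _
        show u⁻¹ * (Z.pow z (x.toAdd + y.toAdd) * Z.pow d (x.toAdd + y.toAdd)) * u =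
          (u⁻¹ * (Z.pow z x.toAdd * Z.pow d x.toAdd) * u) *
          (u⁻¹ * (Z.pow z y.toAdd * Z.pow d y.toAdd) * u)
        rw [Z.zpow_add, Z.zpow_add]
        calc u⁻¹ * (Z.pow z x.toAdd * Z.pow z y.toAdd * (Z.pow d x.toAdd * Z.pow d y.toAdd)) * u
            = u⁻¹ * (Z.pow z x.toAdd * (Z.pow z y.toAdd * Z.pow d x.toAdd) * Z.pow d y.toAdd)
              * u := by group
          _ = u⁻¹ * (Z.pow z x.toAdd * (Z.pow d x.toAdd * Z.pow z y.toAdd) * Z.pow d y.toAdd)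
              * u := by rw [c']
          _ = (u⁻¹ * (Z.pow z x.toAdd * Z.pow d x.toAdd) * u) *
              (u⁻¹ * (Z.pow z y.toAdd * Z.pow d y.toAdd) * u) := by group
      continuous_toFun := (continuous_const.mul
        ((map_continuous (Z.powHom z)).mul (map_continuous (Z.powHom d)))).mul
        continuous_const }
  have h1 : ψ (Multiplicative.ofAdd (1 : Z.R)) = d := by
    show u⁻¹ * (Z.pow z (1 : Z.R) * Z.pow d (1 : Z.R)) * u = d
    rw [Z.zpow_one, Z.zpow_one, e1, h', ← hu]; group
  have h2 := Z.pow_eq d ψ h1 t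
  have h3 : ψ (Multiplicative.ofAdd t) = u⁻¹ * (Z.pow z t * Z.pow d t) * u := rfl
  rw [h3] at h2
  calc u * Z.pow d t * u⁻¹ = u * (u⁻¹ * (Z.pow z t * Z.pow d t) * u) * u⁻¹ := by rw [← h2]
    _ = Z.pow z t * Z.pow d t := by group

end ZhatModel

namespace F2Model

variable (F2 : F2Model) {G : Type} [Group G] [TopologicalSpace G] [IsProfiniteGroup G]

/-- The canonical continuous homomorphism `F̂₂ → G` with `x ↦ a`, `y ↦ b`. -/
noncomputable def evalHom (a b : G) : ContinuousMonoidHom F2.F G :=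
  (F2.free G a b).exists.choose

lemma evalHom_apply (a b : G) (w : F2.F) : F2.evalHom a b w = F2.eval w a b := rfl

lemma evalHom_x (a b : G) : F2.evalHom a b F2.x = a := (F2.free G a b).exists.choose_spec.1

lemma evalHom_y (a b : G) : F2.evalHom a b F2.y = b := (F2.free G a b).exists.choose_spec.2

lemma eval_eq (a b : G) (ψ : ContinuousMonoidHom F2.F G) (hx : ψ F2.x = a) (hy : ψ F2.y = b)
    (w : F2.F) : F2.eval w a b = ψ w := by
  have h2 : F2.evalHom a b = ψ :=
    (F2.free G a b).unique ⟨F2.evalHom_x a b, F2.evalHom_y a b⟩ ⟨hx, hy⟩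
  rw [← F2.evalHom_apply, h2]

lemma eval_mul (a b : G) (v w : F2.F) :
    F2.eval (v * w) a b = F2.eval v a b * F2.eval w a b := map_mul (F2.evalHom a b) v w

lemma eval_x (a b : G) : F2.eval F2.x a b = a := F2.evalHom_x a b

lemma eval_y (a b : G) : F2.eval F2.y a b = b := F2.evalHom_y a b

lemma eval_id (w : F2.F) : F2.eval w F2.x F2.y = w := by
  have h := F2.eval_eq F2.x F2.y ⟨MonoidHom.id F2.F, continuous_id⟩ rfl rfl w
  exact h

lemma eval_conj (a b g : G) (w : F2.F) :
    g * F2.eval w a b * g⁻¹ = F2.eval w (g * a * g⁻¹) (g * b * g⁻¹) := by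
  let ψ : ContinuousMonoidHom F2.F G :=
    { toFun := fun v => g * F2.eval v a b * g⁻¹
      map_one' := by
        show g * F2.eval 1 a b * g⁻¹ = 1
        rw [show F2.eval 1 a b = 1 from map_one (F2.evalHom a b)]; group
      map_mul' := by
        intro v v'
        show g * F2.eval (v * v') a b * g⁻¹ = (g * F2.eval v a b * g⁻¹) * (g * F2.eval v' a b * g⁻¹)
        rw [F2.eval_mul]; group
      continuous_toFun :=
        (continuous_const.mul (map_continuous (F2.evalHom a b))).mul continuous_const }
  have hx : ψ F2.x = g * a * g⁻¹ := by show g * F2.eval F2.x a b * g⁻¹ = _; rw [F2.eval_x]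
  have hy : ψ F2.y = g * b * g⁻¹ := by show g * F2.eval F2.y a b * g⁻¹ = _; rw [F2.eval_y]
  exact (F2.eval_eq _ _ ψ hx hy w).symm

lemma eval_comm (a b g : G) (ha : g * a = a * g) (hb : g * b = b * g) (w : F2.F) :
    g * F2.eval w a b = F2.eval w a b * g := by
  have h1 : g * a * g⁻¹ = a := by rw [ha]; group
  have h2 : g * b * g⁻¹ = b := by rw [hb]; group
  have h3 := F2.eval_conj a b g w
  rw [h1, h2] at h3
  calc g * F2.eval w a b = (g * F2.eval w a b * g⁻¹) * g := by group
    _ = F2.eval w a b * g := by rw [h3]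

lemma eval_swap (a b : G) (w : F2.F) :
    F2.eval (F2.eval w F2.y F2.x) a b = F2.eval w b a := by
  let ψ : ContinuousMonoidHom F2.F G := (F2.evalHom a b).comp (F2.evalHom F2.y F2.x)
  have hx : ψ F2.x = b := by
    show F2.evalHom a b (F2.evalHom F2.y F2.x F2.x) = b
    rw [F2.evalHom_x, F2.evalHom_y]
  have hy : ψ F2.y = a := by
    show F2.evalHom a b (F2.evalHom F2.y F2.x F2.y) = a
    rw [F2.evalHom_y, F2.evalHom_x]
  exact (F2.eval_eq b a ψ hx hy w).symm

lemma eval_I (f : F2.F) (hI : F2.eval f F2.x F2.y * F2.eval f F2.y F2.x = 1) (a b : G) :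
    F2.eval f b a = (F2.eval f a b)⁻¹ := by
  rw [F2.eval_id] at hI
  have h := congrArg (F2.evalHom a b) hI
  rw [map_mul, map_one] at h
  rw [F2.evalHom_apply, F2.evalHom_apply, F2.eval_swap] at h
  exact (inv_eq_of_mul_eq_one_right h).symm

lemma eval_mem_closure (a b : G) (w : F2.F) :
    F2.eval w a b ∈ (Subgroup.closure ({a, b} : Set G)).topologicalClosure := by
  set H := (Subgroup.closure ({a, b} : Set G)).topologicalClosure with hH
  haveI : IsProfiniteGroup ↥H :=
    isProfiniteGroup_closed_subgroup _ (Subgroup.isClosed_topologicalClosure _)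
  have ha : a ∈ H := (Subgroup.le_topologicalClosure _) (Subgroup.subset_closure (by simp))
  have hb : b ∈ H := (Subgroup.le_topologicalClosure _) (Subgroup.subset_closure (by simp))
  let ψ0 : ContinuousMonoidHom F2.F ↥H := (F2.free ↥H ⟨a, ha⟩ ⟨b, hb⟩).exists.choose
  have hs := (F2.free ↥H ⟨a, ha⟩ ⟨b, hb⟩).exists.choose_spec
  let ψ : ContinuousMonoidHom F2.F G :=
    ⟨H.subtype.comp ψ0.toMonoidHom, continuous_subtype_val.comp (map_continuous ψ0)⟩
  have hx : ψ F2.x = a := by show ((ψ0 F2.x : ↥H) : G) = a; rw [hs.1]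
  have hy : ψ F2.y = b := by show ((ψ0 F2.y : ↥H) : G) = b; rw [hs.2]
  have h := F2.eval_eq a b ψ hx hy w
  rw [h]
  exact (ψ0 w).2

lemma mem_topClosure_xy (w : F2.F) :
    w ∈ (Subgroup.closure ({F2.x, F2.y} : Set F2.F)).topologicalClosure := by
  have h := F2.eval_mem_closure F2.x F2.y w
  rwa [F2.eval_id] at h

end F2Model

namespace ZhatModel

variable (Z : ZhatModel) {G : Type} [Group G] [TopologicalSpace G] [IsProfiniteGroup G]

lemma pow_mem_closure (a : G) (t : Z.R) :
    Z.pow a t ∈ (Subgroup.closure ({a} : Set G)).topologicalClosure := by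
  set H := (Subgroup.closure ({a} : Set G)).topologicalClosure with hH
  haveI : IsProfiniteGroup ↥H :=
    isProfiniteGroup_closed_subgroup _ (Subgroup.isClosed_topologicalClosure _)
  have ha : a ∈ H := (Subgroup.le_topologicalClosure _) (Subgroup.subset_closure (by simp))
  let ψ0 : ContinuousMonoidHom (Multiplicative Z.R) ↥H := (Z.free ↥H ⟨a, ha⟩).exists.choose
  have hs := (Z.free ↥H ⟨a, ha⟩).exists.choose_spec
  let ψ : ContinuousMonoidHom (Multiplicative Z.R) G :=
    ⟨H.subtype.comp ψ0.toMonoidHom, continuous_subtype_val.comp (map_continuous ψ0)⟩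
  have h1 : ψ (Multiplicative.ofAdd (1 : Z.R)) = a := by
    show ((ψ0 (Multiplicative.ofAdd (1 : Z.R)) : ↥H) : G) = a
    rw [hs]
  have h := Z.pow_eq a ψ h1 t
  rw [h]
  exact (ψ0 (Multiplicative.ofAdd t)).2

end ZhatModel

section Closures

variable {G : Type} [Group G] [TopologicalSpace G] [IsProfiniteGroup G]

lemma mem_closed_of_subgroup_subset {S : Subgroup G} {P : Set G} (hP : IsClosed P)
    (h : (S : Set G) ⊆ P) {x : G} (hx : x ∈ S.topologicalClosure) : x ∈ P := by
  have h2 : (S.topologicalClosure : Set G) ⊆ P := by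
    rw [Subgroup.topologicalClosure_coe]
    exact closure_minimal h hP
  exact h2 hx

lemma isClosed_comm_set (c : G) : IsClosed {g : G | g * c = c * g} :=
  isClosed_eq (continuous_id.mul continuous_const) (continuous_const.mul continuous_id)

end Closures

set_option linter.unusedSectionVars false

section KMachine

variable {G : Type} [Group G] [TopologicalSpace G] [IsProfiniteGroup G]

/-- The closed subgroup topologically generated by `z`. -/
def Ksub (z : G) : Subgroup G := (Subgroup.closure ({z} : Set G)).topologicalClosure

lemma isClosed_Ksub (z : G) : IsClosed ((Ksub z : Subgroup G) : Set G) :=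
  Subgroup.isClosed_topologicalClosure _

lemma z_mem_Ksub (z : G) : z ∈ Ksub z :=
  (Subgroup.le_topologicalClosure _) (Subgroup.subset_closure (by simp))

lemma Ksub_comm {z c : G} (hzc : z * c = c * z) : ∀ ξ ∈ Ksub z, ξ * c = c * ξ := by
  intro ξ hξ
  have h1 : Subgroup.closure ({z} : Set G) ≤ Subgroup.centralizer {c} := by
    rw [Subgroup.closure_le]
    intro w hw
    rw [Set.mem_singleton_iff] at hw
    subst hw
    rw [SetLike.mem_coe, Subgroup.mem_centralizer_iff]
    intro m hm
    rw [Set.mem_singleton_iff] at hm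
    subst hm
    exact hzc.symm
  have h2 : ((Subgroup.closure ({z} : Set G)) : Set G) ⊆ {g : G | g * c = c * g} := by
    intro g hg
    have := h1 hg
    rw [Subgroup.mem_centralizer_iff] at this
    exact (this c (by simp)).symm
  exact mem_closed_of_subgroup_subset (isClosed_comm_set c) h2 hξ

lemma Ksub_conj_mem {z g : G} (hg : g * z * g⁻¹ ∈ Subgroup.closure ({z} : Set G)) :
    ∀ ξ ∈ Ksub z, g * ξ * g⁻¹ ∈ Ksub z := by
  intro ξ hξ
  have hmaps : ∀ h ∈ Subgroup.closure ({z} : Set G),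
      g * h * g⁻¹ ∈ Subgroup.closure ({z} : Set G) := by
    intro h hh
    induction hh using Subgroup.closure_induction with
    | mem w hw =>
      rw [Set.mem_singleton_iff] at hw; subst hw; exact hg
    | one => simpa using Subgroup.one_mem _
    | mul v w _ _ hv hw =>
      have e : g * (v * w) * g⁻¹ = (g * v * g⁻¹) * (g * w * g⁻¹) := by group
      rw [e]; exact Subgroup.mul_mem _ hv hw
    | inv v _ hv =>
      have e : g * v⁻¹ * g⁻¹ = (g * v * g⁻¹)⁻¹ := by group
      rw [e]; exact Subgroup.inv_mem _ hv
  have hξ' : ξ ∈ closure ((Subgroup.closure ({z} : Set G)) : Set G) := by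
    rw [← Subgroup.topologicalClosure_coe]; exact hξ
  have hcont : Continuous fun h : G => g * h * g⁻¹ :=
    (continuous_const.mul continuous_id).mul continuous_const
  have := map_mem_closure hcont hξ' (fun h hh => hmaps h hh)
  have hco : ((Ksub z : Subgroup G) : Set G) = closure ((Subgroup.closure ({z} : Set G)) : Set G) :=
    Subgroup.topologicalClosure_coe
  show g * ξ * g⁻¹ ∈ (Ksub z : Subgroup G)
  rw [← SetLike.mem_coe, hco]
  exact this

/-- The subgroup of elements normalizing `Ksub z`. -/
def NNsub (z : G) : Subgroup G where
  carrier := {g | (∀ ξ ∈ Ksub z, g * ξ * g⁻¹ ∈ Ksub z) ∧ (∀ ξ ∈ Ksub z, g⁻¹ * ξ * g ∈ Ksub z)}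
  one_mem' := by
    constructor <;> intro ξ hξ <;> simpa using hξ
  mul_mem' := by
    rintro g h ⟨hg1, hg2⟩ ⟨hh1, hh2⟩
    constructor
    · intro ξ hξ
      have e : (g * h) * ξ * (g * h)⁻¹ = g * (h * ξ * h⁻¹) * g⁻¹ := by group
      rw [e]; exact hg1 _ (hh1 ξ hξ)
    · intro ξ hξ
      have e : (g * h)⁻¹ * ξ * (g * h) = h⁻¹ * (g⁻¹ * ξ * g) * h := by group
      rw [e]; exact hh2 _ (hg2 ξ hξ)
  inv_mem' := by
    rintro g ⟨hg1, hg2⟩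
    constructor
    · intro ξ hξ
      have e : g⁻¹ * ξ * g⁻¹⁻¹ = g⁻¹ * ξ * g := by group
      rw [e]; exact hg2 ξ hξ
    · intro ξ hξ
      have e : g⁻¹⁻¹ * ξ * g⁻¹ = g * ξ * g⁻¹ := by group
      rw [e]; exact hg1 ξ hξ

lemma mem_NNsub {z g : G} :
    g ∈ NNsub z ↔ (∀ ξ ∈ Ksub z, g * ξ * g⁻¹ ∈ Ksub z) ∧ (∀ ξ ∈ Ksub z, g⁻¹ * ξ * g ∈ Ksub z) :=
  Iff.rfl

lemma isClosed_NNsub (z : G) : IsClosed ((NNsub z : Subgroup G) : Set G) := by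
  have hK : IsClosed ((Ksub z : Subgroup G) : Set G) := isClosed_Ksub z
  have he : ((NNsub z : Subgroup G) : Set G) =
      (⋂ ξ ∈ (Ksub z : Subgroup G), {g : G | g * ξ * g⁻¹ ∈ Ksub z}) ∩
      (⋂ ξ ∈ (Ksub z : Subgroup G), {g : G | g⁻¹ * ξ * g ∈ Ksub z}) := by
    ext g
    simp only [SetLike.mem_coe, mem_NNsub, Set.mem_inter_iff, Set.mem_iInter, Set.mem_setOf_eq]
  rw [he]
  apply IsClosed.inter
  · exact isClosed_biInter fun ξ hξ =>
      hK.preimage ((continuous_id.mul continuous_const).mul continuous_inv)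
  · exact isClosed_biInter fun ξ hξ =>
      hK.preimage ((continuous_inv.mul continuous_const).mul continuous_id)

lemma Ksub_le_NNsub (z : G) : Ksub z ≤ NNsub z := by
  intro κ hκ
  have hcom : ∀ ξ ∈ Ksub z, κ * ξ = ξ * κ := by
    intro ξ hξ
    have hξz : ξ * z = z * ξ := Ksub_comm rfl ξ hξ
    exact Ksub_comm hξz.symm κ hκ
  constructor
  · intro ξ hξ
    have e : κ * ξ * κ⁻¹ = ξ := by rw [hcom ξ hξ]; group
    rw [e]; exact hξ
  · intro ξ hξ
    have e : κ⁻¹ * ξ * κ = ξ := by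
      have := hcom ξ hξ
      calc κ⁻¹ * ξ * κ = κ⁻¹ * (ξ * κ) := by group
        _ = κ⁻¹ * (κ * ξ) := by rw [← this]
        _ = ξ := by group
    rw [e]; exact hξ

lemma comm_mem_NNsub {z g : G} (h : z * g = g * z) : g ∈ NNsub z := by
  constructor
  · intro ξ hξ
    have e : g * ξ * g⁻¹ = ξ := by rw [← Ksub_comm h ξ hξ]; group
    rw [e]; exact hξ
  · intro ξ hξ
    have hc := Ksub_comm h ξ hξ
    have e : g⁻¹ * ξ * g = ξ := by
      calc g⁻¹ * ξ * g = g⁻¹ * (ξ * g) := by group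
        _ = g⁻¹ * (g * ξ) := by rw [hc]
        _ = ξ := by group
    rw [e]; exact hξ

lemma inv_conj_of_conj {z b : G} (hbz : b * z * b⁻¹ = z⁻¹) : b⁻¹ * z * b = z⁻¹ := by
  have h1 : z = b⁻¹ * z⁻¹ * b := by
    calc z = b⁻¹ * (b * z * b⁻¹) * b := by group
      _ = b⁻¹ * z⁻¹ * b := by rw [hbz]
  calc b⁻¹ * z * b = (b⁻¹ * z⁻¹ * b)⁻¹ := by group
    _ = z⁻¹ := by rw [← h1]

lemma invert_mem_NNsub {z b : G} (hbz : b * z * b⁻¹ = z⁻¹) : b ∈ NNsub z := by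
  constructor
  · intro ξ hξ
    exact Ksub_conj_mem (by rw [hbz]; exact Subgroup.inv_mem _ (Subgroup.subset_closure (by simp)))
      ξ hξ
  · intro ξ hξ
    have h2 : b⁻¹ * z * b⁻¹⁻¹ ∈ Subgroup.closure ({z} : Set G) := by
      have e : b⁻¹ * z * b⁻¹⁻¹ = b⁻¹ * z * b := by group
      rw [e, inv_conj_of_conj hbz]
      exact Subgroup.inv_mem _ (Subgroup.subset_closure (by simp))
    have e2 : b⁻¹ * ξ * b = b⁻¹ * ξ * b⁻¹⁻¹ := by group
    rw [e2]
    exact Ksub_conj_mem h2 ξ hξ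

end KMachine

section DiffLemma

variable {G : Type} [Group G] [TopologicalSpace G] [IsProfiniteGroup G]

lemma F2Model.eval_inv (F2 : F2Model) (a b : G) (v : F2.F) :
    F2.eval v⁻¹ a b = (F2.eval v a b)⁻¹ := map_inv (F2.evalHom a b) v

lemma eval_mem_NNsub (F2 : F2Model) {a b z : G} (haN : a ∈ NNsub z) (hbN : b ∈ NNsub z)
    (w : F2.F) : F2.eval w a b ∈ NNsub z := by
  have hsub : Subgroup.closure ({a, b} : Set G) ≤ NNsub z := by
    rw [Subgroup.closure_le]
    intro v hv
    rcases hv with h | h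
    · rw [h]; exact haN
    · rw [Set.mem_singleton_iff] at h; rw [h]; exact hbN
  exact mem_closed_of_subgroup_subset (isClosed_NNsub z)
    (fun v hv => hsub hv) (F2.eval_mem_closure a b w)

lemma eval_diff_mem_Ksub (F2 : F2Model) {a b z : G} (haz : z * a = a * z)
    (hbz : b * z * b⁻¹ = z⁻¹) {ζ₀ : G} (hζ₀ : ζ₀ ∈ Ksub z) (f : F2.F) :
    F2.eval f a (ζ₀ * b) * (F2.eval f a b)⁻¹ ∈ Ksub z := by
  have haN : a ∈ NNsub z := comm_mem_NNsub haz
  have hbN : b ∈ NNsub z := invert_mem_NNsub hbz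
  have hb2N : ζ₀ * b ∈ NNsub z := Subgroup.mul_mem _ (Ksub_le_NNsub z hζ₀) hbN
  let S : Subgroup F2.F :=
    { carrier := {w | F2.eval w a (ζ₀ * b) * (F2.eval w a b)⁻¹ ∈ Ksub z}
      one_mem' := by
        simp only [Set.mem_setOf_eq]
        rw [show F2.eval (1 : F2.F) a (ζ₀ * b) = 1 from map_one (F2.evalHom _ _),
            show F2.eval (1 : F2.F) a b = 1 from map_one (F2.evalHom _ _)]
        simpa using Subgroup.one_mem _
      mul_mem' := by
        intro v w hv hw
        simp only [Set.mem_setOf_eq] at hv hw ⊢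
        have e : F2.eval (v * w) a (ζ₀ * b) * (F2.eval (v * w) a b)⁻¹ =
            (F2.eval v a (ζ₀ * b) * (F2.eval v a b)⁻¹) *
            (F2.eval v a b * (F2.eval w a (ζ₀ * b) * (F2.eval w a b)⁻¹) *
              (F2.eval v a b)⁻¹) := by
          rw [F2.eval_mul, F2.eval_mul]; group
        rw [e]
        exact Subgroup.mul_mem _ hv ((eval_mem_NNsub F2 haN hbN v).1 _ hw)
      inv_mem' := by
        intro v hv
        simp only [Set.mem_setOf_eq] at hv ⊢
        have e : F2.eval v⁻¹ a (ζ₀ * b) * (F2.eval v⁻¹ a b)⁻¹ =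
            (F2.eval v a (ζ₀ * b))⁻¹ *
              (F2.eval v a (ζ₀ * b) * (F2.eval v a b)⁻¹)⁻¹ * (F2.eval v a (ζ₀ * b)) := by
          rw [F2.eval_inv, F2.eval_inv]; group
        rw [e]
        exact (eval_mem_NNsub F2 haN hb2N v).2 _ (Subgroup.inv_mem _ hv)
      }
  have hSclosed : IsClosed (S : Set F2.F) := by
    have he : (S : Set F2.F) =
        (fun w => F2.evalHom a (ζ₀ * b) w * (F2.evalHom a b w)⁻¹) ⁻¹' ((Ksub z) : Set G) := rfl
    rw [he]
    exact (isClosed_Ksub z).preimage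
      ((map_continuous (F2.evalHom a (ζ₀ * b))).mul (map_continuous (F2.evalHom a b)).inv)
  have hxy : Subgroup.closure ({F2.x, F2.y} : Set F2.F) ≤ S := by
    rw [Subgroup.closure_le]
    intro v hv
    rcases hv with h | h
    · rw [h]
      show F2.eval F2.x a (ζ₀ * b) * (F2.eval F2.x a b)⁻¹ ∈ Ksub z
      rw [F2.eval_x, F2.eval_x]
      simpa using Subgroup.one_mem _
    · rw [Set.mem_singleton_iff] at h; rw [h]
      show F2.eval F2.y a (ζ₀ * b) * (F2.eval F2.y a b)⁻¹ ∈ Ksub z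
      rw [F2.eval_y, F2.eval_y]
      have e : (ζ₀ * b) * b⁻¹ = ζ₀ := by group
      rw [e]; exact hζ₀
  exact mem_closed_of_subgroup_subset hSclosed (fun v hv => hxy hv) (F2.mem_topClosure_xy f)

end DiffLemma

section Braid

set_option maxHeartbeats 4000000

variable {H : Type*} [Group H]

private lemma conj_shift {c a b : H} (h : c * a = b * c) : c * a⁻¹ = b⁻¹ * c := by
  calc c * a⁻¹ = b⁻¹ * (b * c) * a⁻¹ := by group
    _ = b⁻¹ * (c * a) * a⁻¹ := by rw [← h]
    _ = b⁻¹ * c := by group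

lemma braid_w4_y5 (s1 s2 s3 s4 : H)
    (h12 : s1*s2*s1 = s2*s1*s2) (h23 : s2*s3*s2 = s3*s2*s3) (h34 : s3*s4*s3 = s4*s3*s4)
    (c13 : s1*s3 = s3*s1) (c14 : s1*s4 = s4*s1) (c24 : s2*s4 = s4*s2) :
    (s1*s2*s3)*(s1*s2*s3)*(s1*s2*s3)*(s1*s2*s3) * (s4*(s3*(s2*(s1*s1)*s2)*s3)*s4) = (s4*(s3*(s2*(s1*s1)*s2)*s3)*s4) * ((s1*s2*s3)*(s1*s2*s3)*(s1*s2*s3)*(s1*s2*s3)) := by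
  have A1 : (s1*s2*s3*s4) * s1 = s2 * (s1*s2*s3*s4) := by
    calc s1*s2*s3*s4*s1 = s1*s2*s3*(s4*s1) := by group
      _ = s1*s2*s3*(s1*s4) := by rw [← c14]
      _ = s1*s2*(s3*s1)*s4 := by group
      _ = s1*s2*(s1*s3)*s4 := by rw [← c13]
      _ = (s1*s2*s1)*s3*s4 := by group
      _ = (s2*s1*s2)*s3*s4 := by rw [h12]
      _ = s2*(s1*s2*s3*s4) := by group
  have A2 : (s1*s2*s3*s4) * s2 = s3 * (s1*s2*s3*s4) := by
    calc s1*s2*s3*s4*s2 = s1*s2*s3*(s4*s2) := by group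
      _ = s1*s2*s3*(s2*s4) := by rw [← c24]
      _ = s1*(s2*s3*s2)*s4 := by group
      _ = s1*(s3*s2*s3)*s4 := by rw [h23]
      _ = (s1*s3)*s2*s3*s4 := by group
      _ = (s3*s1)*s2*s3*s4 := by rw [c13]
      _ = s3*(s1*s2*s3*s4) := by group
  have A3 : (s1*s2*s3*s4) * s3 = s4 * (s1*s2*s3*s4) := by
    calc s1*s2*s3*s4*s3 = s1*s2*(s3*s4*s3) := by group
      _ = s1*s2*(s4*s3*s4) := by rw [h34]
      _ = s1*(s2*s4)*s3*s4 := by group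
      _ = s1*(s4*s2)*s3*s4 := by rw [c24]
      _ = (s1*s4)*s2*s3*s4 := by group
      _ = (s4*s1)*s2*s3*s4 := by rw [c14]
      _ = s4*(s1*s2*s3*s4) := by group
  have E : (s1*s2*s3*s4)*(s1*s2*s3*s4)*s4 = s1*((s1*s2*s3*s4)*(s1*s2*s3*s4)) := by
    have L : (s1*s2*s3*s4)*(s1*s2*s3*s4)*s4 = s1*s2*s1*s2*s3*s2*s4*s3*s4 := by
      calc (s1*s2*s3*s4)*(s1*s2*s3*s4)*s4 = s1*s2*s3*(s4*s1)*s2*s3*s4*s4 := by group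
        _ = s1*s2*s3*(s1*s4)*s2*s3*s4*s4 := by rw [← c14]
        _ = s1*s2*s3*s1*(s4*s2)*s3*s4*s4 := by group
        _ = s1*s2*s3*s1*(s2*s4)*s3*s4*s4 := by rw [← c24]
        _ = s1*s2*s3*s1*s2*(s4*s3*s4)*s4 := by group
        _ = s1*s2*s3*s1*s2*(s3*s4*s3)*s4 := by rw [← h34]
        _ = s1*s2*(s3*s1)*s2*s3*s4*s3*s4 := by group
        _ = s1*s2*(s1*s3)*s2*s3*s4*s3*s4 := by rw [← c13]
        _ = s1*s2*s1*(s3*s2*s3)*s4*s3*s4 := by group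
        _ = s1*s2*s1*(s2*s3*s2)*s4*s3*s4 := by rw [← h23]
        _ = s1*s2*s1*s2*s3*s2*s4*s3*s4 := by group
    have R : s1*((s1*s2*s3*s4)*(s1*s2*s3*s4)) = s1*s2*s1*s2*s3*s2*s4*s3*s4 := by
      calc s1*((s1*s2*s3*s4)*(s1*s2*s3*s4)) = s1*s1*s2*s3*(s4*s1)*s2*s3*s4 := by group
        _ = s1*s1*s2*s3*(s1*s4)*s2*s3*s4 := by rw [← c14]
        _ = s1*s1*s2*(s3*s1)*s4*s2*s3*s4 := by group
        _ = s1*s1*s2*(s1*s3)*s4*s2*s3*s4 := by rw [← c13]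
        _ = s1*(s1*s2*s1)*s3*s4*s2*s3*s4 := by group
        _ = s1*(s2*s1*s2)*s3*s4*s2*s3*s4 := by rw [h12]
        _ = s1*s2*s1*s2*s3*(s4*s2)*s3*s4 := by group
        _ = s1*s2*s1*s2*s3*(s2*s4)*s3*s4 := by rw [← c24]
        _ = s1*s2*s1*s2*s3*s2*s4*s3*s4 := by group
    rw [L, R]
  have I1 := conj_shift A1
  have I2 := conj_shift A2
  have I3 := conj_shift A3
  have I4 : (s1*s2*s3*s4) * s4⁻¹ = s1*s2*s3 := by group
  have F2id : (s1*s2*s3*s4)*(s1*s2*s3*s4)*(s1*s2*s3*s4)*(s1*s2*s3*s4) = (s1*s2*s3)*(s1*s2*s3)*(s1*s2*s3)*(s1*s2*s3) * (s4*s3*s2*s1) := by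
    have h : (s1*s2*s3*s4)*(s1*s2*s3*s4)*(s1*s2*s3*s4)*(s1*s2*s3*s4) * (s4*s3*s2*s1)⁻¹ = (s1*s2*s3)*(s1*s2*s3)*(s1*s2*s3)*(s1*s2*s3) := by
      calc (s1*s2*s3*s4)*(s1*s2*s3*s4)*(s1*s2*s3*s4)*(s1*s2*s3*s4) * (s4*s3*s2*s1)⁻¹
          _ = (s1*s2*s3*s4)*(s1*s2*s3*s4)*(s1*s2*s3*s4) * ((s1*s2*s3*s4) * s1⁻¹) * (s2⁻¹*(s3⁻¹*s4⁻¹)) := by group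
          _ = (s1*s2*s3*s4)*(s1*s2*s3*s4)*(s1*s2*s3*s4) * (s2⁻¹ * (s1*s2*s3*s4)) * (s2⁻¹*(s3⁻¹*s4⁻¹)) := by rw [I1]
          _ = (s1*s2*s3*s4)*(s1*s2*s3*s4)*(s1*s2*s3*s4) * s2⁻¹ * ((s1*s2*s3*s4) * s2⁻¹) * (s3⁻¹*s4⁻¹) := by group
          _ = (s1*s2*s3*s4)*(s1*s2*s3*s4)*(s1*s2*s3*s4) * s2⁻¹ * (s3⁻¹ * (s1*s2*s3*s4)) * (s3⁻¹*s4⁻¹) := by rw [I2]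
          _ = (s1*s2*s3*s4)*(s1*s2*s3*s4)*(s1*s2*s3*s4) * s2⁻¹ * s3⁻¹ * ((s1*s2*s3*s4) * s3⁻¹) * s4⁻¹ := by group
          _ = (s1*s2*s3*s4)*(s1*s2*s3*s4)*(s1*s2*s3*s4) * s2⁻¹ * s3⁻¹ * (s4⁻¹ * (s1*s2*s3*s4)) * s4⁻¹ := by rw [I3]
          _ = (s1*s2*s3*s4)*(s1*s2*s3*s4)*(s1*s2*s3*s4) * s2⁻¹ * s3⁻¹ * s4⁻¹ * ((s1*s2*s3*s4) * s4⁻¹) := by group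
          _ = (s1*s2*s3*s4)*(s1*s2*s3*s4)*(s1*s2*s3*s4) * s2⁻¹ * s3⁻¹ * s4⁻¹ * (s1*s2*s3) := by rw [I4]
          _ = (s1*s2*s3*s4)*(s1*s2*s3*s4) * ((s1*s2*s3*s4) * s2⁻¹) * s3⁻¹ * s4⁻¹ * (s1*s2*s3) := by group
          _ = (s1*s2*s3*s4)*(s1*s2*s3*s4) * (s3⁻¹ * (s1*s2*s3*s4)) * s3⁻¹ * s4⁻¹ * (s1*s2*s3) := by rw [I2]
          _ = (s1*s2*s3*s4)*(s1*s2*s3*s4) * s3⁻¹ * ((s1*s2*s3*s4) * s3⁻¹) * s4⁻¹ * (s1*s2*s3) := by group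
          _ = (s1*s2*s3*s4)*(s1*s2*s3*s4) * s3⁻¹ * (s4⁻¹ * (s1*s2*s3*s4)) * s4⁻¹ * (s1*s2*s3) := by rw [I3]
          _ = (s1*s2*s3*s4)*(s1*s2*s3*s4) * s3⁻¹ * s4⁻¹ * ((s1*s2*s3*s4) * s4⁻¹) * (s1*s2*s3) := by group
          _ = (s1*s2*s3*s4)*(s1*s2*s3*s4) * s3⁻¹ * s4⁻¹ * (s1*s2*s3) * (s1*s2*s3) := by rw [I4]
          _ = (s1*s2*s3*s4) * ((s1*s2*s3*s4) * s3⁻¹) * s4⁻¹ * (s1*s2*s3) * (s1*s2*s3) := by group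
          _ = (s1*s2*s3*s4) * (s4⁻¹ * (s1*s2*s3*s4)) * s4⁻¹ * (s1*s2*s3) * (s1*s2*s3) := by rw [I3]
          _ = (s1*s2*s3*s4) * s4⁻¹ * ((s1*s2*s3*s4) * s4⁻¹) * (s1*s2*s3) * (s1*s2*s3) := by group
          _ = (s1*s2*s3*s4) * s4⁻¹ * (s1*s2*s3) * (s1*s2*s3) * (s1*s2*s3) := by rw [I4]
          _ = ((s1*s2*s3*s4) * s4⁻¹) * ((s1*s2*s3) * (s1*s2*s3) * (s1*s2*s3)) := by group
          _ = (s1*s2*s3) * ((s1*s2*s3) * (s1*s2*s3) * (s1*s2*s3)) := by rw [I4]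
          _ = (s1*s2*s3)*(s1*s2*s3)*(s1*s2*s3)*(s1*s2*s3) := by group
    calc (s1*s2*s3*s4)*(s1*s2*s3*s4)*(s1*s2*s3*s4)*(s1*s2*s3*s4) = ((s1*s2*s3*s4)*(s1*s2*s3*s4)*(s1*s2*s3*s4)*(s1*s2*s3*s4) * (s4*s3*s2*s1)⁻¹) * (s4*s3*s2*s1) := by group
      _ = (s1*s2*s3)*(s1*s2*s3)*(s1*s2*s3)*(s1*s2*s3) * (s4*s3*s2*s1) := by rw [h]
  have Z1 : (s1*s2*s3*s4)*(s1*s2*s3*s4)*(s1*s2*s3*s4)*(s1*s2*s3*s4)*(s1*s2*s3*s4) * s1 = s1 * (s1*s2*s3*s4)*(s1*s2*s3*s4)*(s1*s2*s3*s4)*(s1*s2*s3*s4)*(s1*s2*s3*s4) := by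
    calc (s1*s2*s3*s4)*(s1*s2*s3*s4)*(s1*s2*s3*s4)*(s1*s2*s3*s4)*(s1*s2*s3*s4) * s1
        _ = (s1*s2*s3*s4)*(s1*s2*s3*s4)*(s1*s2*s3*s4)*(s1*s2*s3*s4) * ((s1*s2*s3*s4) * s1) := by group
        _ = (s1*s2*s3*s4)*(s1*s2*s3*s4)*(s1*s2*s3*s4)*(s1*s2*s3*s4) * (s2 * (s1*s2*s3*s4)) := by rw [A1]
        _ = (s1*s2*s3*s4)*(s1*s2*s3*s4)*(s1*s2*s3*s4) * ((s1*s2*s3*s4) * s2) * (s1*s2*s3*s4) := by group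
        _ = (s1*s2*s3*s4)*(s1*s2*s3*s4)*(s1*s2*s3*s4) * (s3 * (s1*s2*s3*s4)) * (s1*s2*s3*s4) := by rw [A2]
        _ = (s1*s2*s3*s4)*(s1*s2*s3*s4) * ((s1*s2*s3*s4) * s3) * (s1*s2*s3*s4)*(s1*s2*s3*s4) := by group
        _ = (s1*s2*s3*s4)*(s1*s2*s3*s4) * (s4 * (s1*s2*s3*s4)) * (s1*s2*s3*s4)*(s1*s2*s3*s4) := by rw [A3]
        _ = ((s1*s2*s3*s4)*(s1*s2*s3*s4)*s4) * (s1*s2*s3*s4)*(s1*s2*s3*s4)*(s1*s2*s3*s4) := by group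
        _ = (s1*((s1*s2*s3*s4)*(s1*s2*s3*s4))) * (s1*s2*s3*s4)*(s1*s2*s3*s4)*(s1*s2*s3*s4) := by rw [E]
        _ = s1 * (s1*s2*s3*s4)*(s1*s2*s3*s4)*(s1*s2*s3*s4)*(s1*s2*s3*s4)*(s1*s2*s3*s4) := by group
  have Z2 : (s1*s2*s3*s4)*(s1*s2*s3*s4)*(s1*s2*s3*s4)*(s1*s2*s3*s4)*(s1*s2*s3*s4) * s2 = s2 * (s1*s2*s3*s4)*(s1*s2*s3*s4)*(s1*s2*s3*s4)*(s1*s2*s3*s4)*(s1*s2*s3*s4) := by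
    calc (s1*s2*s3*s4)*(s1*s2*s3*s4)*(s1*s2*s3*s4)*(s1*s2*s3*s4)*(s1*s2*s3*s4) * s2
        _ = (s1*s2*s3*s4)*(s1*s2*s3*s4)*(s1*s2*s3*s4)*(s1*s2*s3*s4) * ((s1*s2*s3*s4) * s2) := by group
        _ = (s1*s2*s3*s4)*(s1*s2*s3*s4)*(s1*s2*s3*s4)*(s1*s2*s3*s4) * (s3 * (s1*s2*s3*s4)) := by rw [A2]
        _ = (s1*s2*s3*s4)*(s1*s2*s3*s4)*(s1*s2*s3*s4) * ((s1*s2*s3*s4) * s3) * (s1*s2*s3*s4) := by group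
        _ = (s1*s2*s3*s4)*(s1*s2*s3*s4)*(s1*s2*s3*s4) * (s4 * (s1*s2*s3*s4)) * (s1*s2*s3*s4) := by rw [A3]
        _ = (s1*s2*s3*s4) * ((s1*s2*s3*s4)*(s1*s2*s3*s4)*s4) * (s1*s2*s3*s4)*(s1*s2*s3*s4) := by group
        _ = (s1*s2*s3*s4) * (s1*((s1*s2*s3*s4)*(s1*s2*s3*s4))) * (s1*s2*s3*s4)*(s1*s2*s3*s4) := by rw [E]
        _ = ((s1*s2*s3*s4) * s1) * (s1*s2*s3*s4)*(s1*s2*s3*s4)*(s1*s2*s3*s4)*(s1*s2*s3*s4) := by group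
        _ = (s2 * (s1*s2*s3*s4)) * (s1*s2*s3*s4)*(s1*s2*s3*s4)*(s1*s2*s3*s4)*(s1*s2*s3*s4) := by rw [A1]
        _ = s2 * (s1*s2*s3*s4)*(s1*s2*s3*s4)*(s1*s2*s3*s4)*(s1*s2*s3*s4)*(s1*s2*s3*s4) := by group
  have Z3 : (s1*s2*s3*s4)*(s1*s2*s3*s4)*(s1*s2*s3*s4)*(s1*s2*s3*s4)*(s1*s2*s3*s4) * s3 = s3 * (s1*s2*s3*s4)*(s1*s2*s3*s4)*(s1*s2*s3*s4)*(s1*s2*s3*s4)*(s1*s2*s3*s4) := by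
    calc (s1*s2*s3*s4)*(s1*s2*s3*s4)*(s1*s2*s3*s4)*(s1*s2*s3*s4)*(s1*s2*s3*s4) * s3
        _ = (s1*s2*s3*s4)*(s1*s2*s3*s4)*(s1*s2*s3*s4)*(s1*s2*s3*s4) * ((s1*s2*s3*s4) * s3) := by group
        _ = (s1*s2*s3*s4)*(s1*s2*s3*s4)*(s1*s2*s3*s4)*(s1*s2*s3*s4) * (s4 * (s1*s2*s3*s4)) := by rw [A3]
        _ = (s1*s2*s3*s4)*(s1*s2*s3*s4) * ((s1*s2*s3*s4)*(s1*s2*s3*s4)*s4) * (s1*s2*s3*s4) := by group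
        _ = (s1*s2*s3*s4)*(s1*s2*s3*s4) * (s1*((s1*s2*s3*s4)*(s1*s2*s3*s4))) * (s1*s2*s3*s4) := by rw [E]
        _ = (s1*s2*s3*s4) * ((s1*s2*s3*s4) * s1) * (s1*s2*s3*s4)*(s1*s2*s3*s4)*(s1*s2*s3*s4) := by group
        _ = (s1*s2*s3*s4) * (s2 * (s1*s2*s3*s4)) * (s1*s2*s3*s4)*(s1*s2*s3*s4)*(s1*s2*s3*s4) := by rw [A1]
        _ = ((s1*s2*s3*s4) * s2) * (s1*s2*s3*s4)*(s1*s2*s3*s4)*(s1*s2*s3*s4)*(s1*s2*s3*s4) := by group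
        _ = (s3 * (s1*s2*s3*s4)) * (s1*s2*s3*s4)*(s1*s2*s3*s4)*(s1*s2*s3*s4)*(s1*s2*s3*s4) := by rw [A2]
        _ = s3 * (s1*s2*s3*s4)*(s1*s2*s3*s4)*(s1*s2*s3*s4)*(s1*s2*s3*s4)*(s1*s2*s3*s4) := by group
  have Zb : (s1*s2*s3*s4)*(s1*s2*s3*s4)*(s1*s2*s3*s4)*(s1*s2*s3*s4)*(s1*s2*s3*s4) * (s1*s2*s3) = (s1*s2*s3) * (s1*s2*s3*s4)*(s1*s2*s3*s4)*(s1*s2*s3*s4)*(s1*s2*s3*s4)*(s1*s2*s3*s4) := by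
    calc (s1*s2*s3*s4)*(s1*s2*s3*s4)*(s1*s2*s3*s4)*(s1*s2*s3*s4)*(s1*s2*s3*s4) * (s1*s2*s3) = ((s1*s2*s3*s4)*(s1*s2*s3*s4)*(s1*s2*s3*s4)*(s1*s2*s3*s4)*(s1*s2*s3*s4) * s1) * s2 * s3 := by group
      _ = s1 * (s1*s2*s3*s4)*(s1*s2*s3*s4)*(s1*s2*s3*s4)*(s1*s2*s3*s4)*(s1*s2*s3*s4) * s2 * s3 := by rw [Z1]
      _ = s1 * ((s1*s2*s3*s4)*(s1*s2*s3*s4)*(s1*s2*s3*s4)*(s1*s2*s3*s4)*(s1*s2*s3*s4) * s2) * s3 := by group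
      _ = s1 * (s2 * (s1*s2*s3*s4)*(s1*s2*s3*s4)*(s1*s2*s3*s4)*(s1*s2*s3*s4)*(s1*s2*s3*s4)) * s3 := by rw [Z2]
      _ = s1 * s2 * ((s1*s2*s3*s4)*(s1*s2*s3*s4)*(s1*s2*s3*s4)*(s1*s2*s3*s4)*(s1*s2*s3*s4) * s3) := by group
      _ = s1 * s2 * (s3 * (s1*s2*s3*s4)*(s1*s2*s3*s4)*(s1*s2*s3*s4)*(s1*s2*s3*s4)*(s1*s2*s3*s4)) := by rw [Z3]
      _ = (s1*s2*s3) * (s1*s2*s3*s4)*(s1*s2*s3*s4)*(s1*s2*s3*s4)*(s1*s2*s3*s4)*(s1*s2*s3*s4) := by group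
  have ZW : (s1*s2*s3*s4)*(s1*s2*s3*s4)*(s1*s2*s3*s4)*(s1*s2*s3*s4)*(s1*s2*s3*s4) * (s1*s2*s3)*(s1*s2*s3)*(s1*s2*s3)*(s1*s2*s3) = (s1*s2*s3)*(s1*s2*s3)*(s1*s2*s3)*(s1*s2*s3) * (s1*s2*s3*s4)*(s1*s2*s3*s4)*(s1*s2*s3*s4)*(s1*s2*s3*s4)*(s1*s2*s3*s4) := by
    calc (s1*s2*s3*s4)*(s1*s2*s3*s4)*(s1*s2*s3*s4)*(s1*s2*s3*s4)*(s1*s2*s3*s4) * (s1*s2*s3)*(s1*s2*s3)*(s1*s2*s3)*(s1*s2*s3) = ((s1*s2*s3*s4)*(s1*s2*s3*s4)*(s1*s2*s3*s4)*(s1*s2*s3*s4)*(s1*s2*s3*s4) * (s1*s2*s3)) * (s1*s2*s3)*(s1*s2*s3)*(s1*s2*s3) := by group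
      _ = ((s1*s2*s3) * (s1*s2*s3*s4)*(s1*s2*s3*s4)*(s1*s2*s3*s4)*(s1*s2*s3*s4)*(s1*s2*s3*s4)) * (s1*s2*s3)*(s1*s2*s3)*(s1*s2*s3) := by rw [Zb]
      _ = (s1*s2*s3) * ((s1*s2*s3*s4)*(s1*s2*s3*s4)*(s1*s2*s3*s4)*(s1*s2*s3*s4)*(s1*s2*s3*s4) * (s1*s2*s3)) * (s1*s2*s3)*(s1*s2*s3) := by group
      _ = (s1*s2*s3) * ((s1*s2*s3) * (s1*s2*s3*s4)*(s1*s2*s3*s4)*(s1*s2*s3*s4)*(s1*s2*s3*s4)*(s1*s2*s3*s4)) * (s1*s2*s3)*(s1*s2*s3) := by rw [Zb]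
      _ = (s1*s2*s3)*(s1*s2*s3) * ((s1*s2*s3*s4)*(s1*s2*s3*s4)*(s1*s2*s3*s4)*(s1*s2*s3*s4)*(s1*s2*s3*s4) * (s1*s2*s3)) * (s1*s2*s3) := by group
      _ = (s1*s2*s3)*(s1*s2*s3) * ((s1*s2*s3) * (s1*s2*s3*s4)*(s1*s2*s3*s4)*(s1*s2*s3*s4)*(s1*s2*s3*s4)*(s1*s2*s3*s4)) * (s1*s2*s3) := by rw [Zb]
      _ = (s1*s2*s3)*(s1*s2*s3)*(s1*s2*s3) * ((s1*s2*s3*s4)*(s1*s2*s3*s4)*(s1*s2*s3*s4)*(s1*s2*s3*s4)*(s1*s2*s3*s4) * (s1*s2*s3)) := by group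
      _ = (s1*s2*s3)*(s1*s2*s3)*(s1*s2*s3) * ((s1*s2*s3) * (s1*s2*s3*s4)*(s1*s2*s3*s4)*(s1*s2*s3*s4)*(s1*s2*s3*s4)*(s1*s2*s3*s4)) := by rw [Zb]
      _ = (s1*s2*s3)*(s1*s2*s3)*(s1*s2*s3)*(s1*s2*s3) * (s1*s2*s3*s4)*(s1*s2*s3*s4)*(s1*s2*s3*s4)*(s1*s2*s3*s4)*(s1*s2*s3*s4) := by group
  have F2' : (s1*s2*s3*s4)*(s1*s2*s3*s4)*(s1*s2*s3*s4)*(s1*s2*s3*s4)*(s1*s2*s3*s4) = (s1*s2*s3)*(s1*s2*s3)*(s1*s2*s3)*(s1*s2*s3) * (s4*(s3*(s2*(s1*s1)*s2)*s3)*s4) := by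
    calc (s1*s2*s3*s4)*(s1*s2*s3*s4)*(s1*s2*s3*s4)*(s1*s2*s3*s4)*(s1*s2*s3*s4) = (s1*s2*s3*s4)*(s1*s2*s3*s4)*(s1*s2*s3*s4)*(s1*s2*s3*s4) * (s1*s2*s3*s4) := by group
      _ = ((s1*s2*s3)*(s1*s2*s3)*(s1*s2*s3)*(s1*s2*s3) * (s4*s3*s2*s1)) * (s1*s2*s3*s4) := by rw [F2id]
      _ = (s1*s2*s3)*(s1*s2*s3)*(s1*s2*s3)*(s1*s2*s3) * (s4*(s3*(s2*(s1*s1)*s2)*s3)*s4) := by group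
  have hy : (s4*(s3*(s2*(s1*s1)*s2)*s3)*s4) = ((s1*s2*s3)*(s1*s2*s3)*(s1*s2*s3)*(s1*s2*s3))⁻¹ * ((s1*s2*s3*s4)*(s1*s2*s3*s4)*(s1*s2*s3*s4)*(s1*s2*s3*s4)*(s1*s2*s3*s4)) := by
    rw [F2']; group
  calc (s1*s2*s3)*(s1*s2*s3)*(s1*s2*s3)*(s1*s2*s3) * (s4*(s3*(s2*(s1*s1)*s2)*s3)*s4) = (s1*s2*s3*s4)*(s1*s2*s3*s4)*(s1*s2*s3*s4)*(s1*s2*s3*s4)*(s1*s2*s3*s4) := F2'.symm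
    _ = ((s1*s2*s3)*(s1*s2*s3)*(s1*s2*s3)*(s1*s2*s3))⁻¹ * ((s1*s2*s3)*(s1*s2*s3)*(s1*s2*s3)*(s1*s2*s3) * (s1*s2*s3*s4)*(s1*s2*s3*s4)*(s1*s2*s3*s4)*(s1*s2*s3*s4)*(s1*s2*s3*s4)) := by group
    _ = ((s1*s2*s3)*(s1*s2*s3)*(s1*s2*s3)*(s1*s2*s3))⁻¹ * ((s1*s2*s3*s4)*(s1*s2*s3*s4)*(s1*s2*s3*s4)*(s1*s2*s3*s4)*(s1*s2*s3*s4) * (s1*s2*s3)*(s1*s2*s3)*(s1*s2*s3)*(s1*s2*s3)) := by rw [ZW]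
    _ = (((s1*s2*s3)*(s1*s2*s3)*(s1*s2*s3)*(s1*s2*s3))⁻¹ * ((s1*s2*s3*s4)*(s1*s2*s3*s4)*(s1*s2*s3*s4)*(s1*s2*s3*s4)*(s1*s2*s3*s4))) * ((s1*s2*s3)*(s1*s2*s3)*(s1*s2*s3)*(s1*s2*s3)) := by group
    _ = (s4*(s3*(s2*(s1*s1)*s2)*s3)*s4) * ((s1*s2*s3)*(s1*s2*s3)*(s1*s2*s3)*(s1*s2*s3)) := by rw [← hy]

end Braid

section GammaRels

variable (g : ℕ)

lemma mk_rel_one {r : FreeGroup (Fin (2*g+1))} (hr : r ∈ mcgRels g) :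
    PresentedGroup.mk (mcgRels g) r = 1 :=
  (QuotientGroup.eq_one_iff r).mpr (Subgroup.subset_normalClosure hr)

lemma mk_aF (i : ℕ) : PresentedGroup.mk (mcgRels g) (aF g i) = aM g i := by
  by_cases h : 1 ≤ i ∧ i ≤ 2*g
  · rw [aF, aM, dif_pos h, dif_pos h]; rfl
  · rw [aF, aM, dif_neg h, dif_neg h]; exact map_one _

lemma mk_dF : PresentedGroup.mk (mcgRels g) (dF g) = dM g := rfl

lemma relG_braid (i : ℕ) (h1 : 1 ≤ i) (h2 : i + 1 ≤ 2*g) :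
    aM g i * aM g (i+1) * aM g i = aM g (i+1) * aM g i * aM g (i+1) := by
  have hr : (aF g i * aF g (i+1) * aF g i * (aF g (i+1) * aF g i * aF g (i+1))⁻¹) ∈ mcgRels g :=
    Or.inl ⟨i, h1, h2, rfl⟩
  have h := mk_rel_one g hr
  rw [map_mul, map_mul, map_mul, map_inv, map_mul, map_mul] at h
  rw [mk_aF, mk_aF] at h
  exact mul_inv_eq_one.mp h

lemma relG_comm (i j : ℕ) (h1 : 1 ≤ i) (h2 : j ≤ 2*g) (h3 : i + 2 ≤ j) :
    aM g i * aM g j = aM g j * aM g i := by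
  have hr : (aF g i * aF g j * (aF g j * aF g i)⁻¹) ∈ mcgRels g :=
    Or.inr (Or.inl ⟨i, j, h1, h2, h3, rfl⟩)
  have h := mk_rel_one g hr
  rw [map_mul, map_inv, map_mul, map_mul] at h
  rw [mk_aF, mk_aF] at h
  exact mul_inv_eq_one.mp h

lemma relG_dcomm (j : ℕ) (h1 : 1 ≤ j) (h2 : j ≤ 2*g) (h3 : j ≠ 4) :
    dM g * aM g j = aM g j * dM g := by
  have hr : (dF g * aF g j * (aF g j * dF g)⁻¹) ∈ mcgRels g :=
    Or.inr (Or.inr (Or.inr (Or.inl ⟨j, h1, h2, h3, rfl⟩)))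
  have h := mk_rel_one g hr
  rw [map_mul, map_inv, map_mul, map_mul] at h
  rw [mk_aF, mk_dF] at h
  exact mul_inv_eq_one.mp h

lemma mk_genY5 : PresentedGroup.mk (mcgRels g) (genY (aF g) 5) = genY (aM g) 5 := by
  rw [show genY (aF g) 5 =
      aF g 4 * (aF g 3 * (aF g 2 * (aF g 1 * aF g 1) * aF g 2) * aF g 3) * aF g 4 from rfl,
    show genY (aM g) 5 =
      aM g 4 * (aM g 3 * (aM g 2 * (aM g 1 * aM g 1) * aM g 2) * aM g 3) * aM g 4 from rfl]
  simp only [map_mul, mk_aF]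

lemma relG_B :
    dM g * (genY (aM g) 5 * dM g * (genY (aM g) 5)⁻¹) = (aM g 1 * aM g 2 * aM g 3)^4 := by
  have hr : (dF g * dpA (dF g) (aF g) * ((aF g 1 * aF g 2 * aF g 3)^4)⁻¹) ∈ mcgRels g :=
    Or.inr (Or.inr (Or.inr (Or.inr (Or.inl rfl))))
  have h := mk_rel_one g hr
  rw [dpA] at h
  simp only [map_mul, map_inv, map_pow, mk_genY5, mk_aF, mk_dF] at h
  exact mul_inv_eq_one.mp h

end GammaRels

section WordHelpers

variable {G : Type*} [Group G]

lemma genY_succ_of_le (b : ℕ → G) (k : ℕ) (h : 2 ≤ k) :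
    genY b (k+1) = b k * genY b k * b k := by
  obtain ⟨m, rfl⟩ := Nat.exists_eq_add_of_le h
  show genY b (2+m+1) = _
  have e : 2+m+1 = m+3 := by omega
  rw [e]
  have e2 : m + 2 = 2 + m := by omega
  rw [show genY b (m+3) = b (m+2) * genY b (m+2) * b (m+2) from rfl, e2]

end WordHelpers

/-! ## STATEMENT 8 -/

set_option maxHeartbeats 1000000 in
/-- Corollary 4.5: the proposed action of `F = (λ, f) ∈ GT` respects relation (B),
`d^λ (y₅^λ d^λ y₅^{-λ}) = w₄^λ`, and the commutation of `d` with `a_j` for `j ≠ 4`. -/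
theorem proposed_action_respects_relation_B_and_commutations
    (g : ℕ) (hg : 2 ≤ g) (Z : ZhatModel) (F2 : F2Model)
    (l : Z.R) (f : F2.F) (hGT : IsGT Z F2 l f)
    (M : ProfiniteCompletionModel (Gamma1 g)) :
    (Z.pow (M.ι (dM g)) l *
        (Z.pow (M.ι (genY (aM g) 5)) l * Z.pow (M.ι (dM g)) l *
          Z.pow (M.ι (genY (aM g) 5)) (-l)) =
      Z.pow (M.ι (genW (aM g) 4)) l) ∧
    Commute (Z.pow (M.ι (dM g)) l) (Z.pow (M.ι (aM g 1)) l) ∧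
    (∀ j : ℕ, 2 ≤ j → j ≤ 2*g → j ≠ 4 →
      Commute (Z.pow (M.ι (dM g)) l)
        (F2.eval f (M.ι (aM g j) ^ 2) (M.ι (genY (aM g) j)) *
          Z.pow (M.ι (aM g j)) l *
          F2.eval f (M.ι (genY (aM g) j)) (M.ι (aM g j) ^ 2))) := by
  obtain ⟨-, ⟨m, hm⟩, -, hI, -, -⟩ := hGT
  have h2g4 : 4 ≤ 2*g := by omega
  -- relations in the profinite completion
  have hdcM : ∀ i : ℕ, 1 ≤ i → i ≤ 2*g → i ≠ 4 →
      M.ι (dM g) * M.ι (aM g i) = M.ι (aM g i) * M.ι (dM g) := by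
    intro i h1 h2 h3
    simpa only [map_mul] using congrArg M.ι (relG_dcomm g i h1 h2 h3)
  have hcmM : ∀ i j : ℕ, 1 ≤ i → j ≤ 2*g → i + 2 ≤ j →
      M.ι (aM g i) * M.ι (aM g j) = M.ι (aM g j) * M.ι (aM g i) := by
    intro i j h1 h2 h3
    simpa only [map_mul] using congrArg M.ι (relG_comm g i j h1 h2 h3)
  have hbrM : ∀ i : ℕ, 1 ≤ i → i + 1 ≤ 2*g →
      M.ι (aM g i) * M.ι (aM g (i+1)) * M.ι (aM g i) =
      M.ι (aM g (i+1)) * M.ι (aM g i) * M.ι (aM g (i+1)) := by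
    intro i h1 h2
    simpa only [map_mul] using congrArg M.ι (relG_braid g i h1 h2)
  have pow4 : ∀ x : M.C, x^4 = x*x*x*x := fun x => by
    rw [show x^4 = x^3*x from pow_succ x 3, show x^3 = x^2*x from pow_succ x 2,
      show x^2 = x^1*x from pow_succ x 1, pow_one]
  set D := M.ι (dM g) with hDdef
  set U := M.ι (genY (aM g) 5) with hUdef
  set v := (M.ι (aM g 1) * M.ι (aM g 2) * M.ι (aM g 3))^4 with hvdef
  have hBM : D * (U * D * U⁻¹) = v := by
    rw [hDdef, hUdef, hvdef]
    simpa only [map_mul, map_inv, map_pow] using congrArg M.ι (relG_B g)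
  have hDV : D * v = v * D := by
    have c1 : Commute D (M.ι (aM g 1)) := hdcM 1 (by omega) (by omega) (by omega)
    have c2 : Commute D (M.ι (aM g 2)) := hdcM 2 (by omega) (by omega) (by omega)
    have c3 : Commute D (M.ι (aM g 3)) := hdcM 3 (by omega) (by omega) (by omega)
    have hcom : Commute D (M.ι (aM g 1) * M.ι (aM g 2) * M.ι (aM g 3)) :=
      (c1.mul_right c2).mul_right c3
    exact hcom.pow_right 4
  have hUexp : U = M.ι (aM g 4) * (M.ι (aM g 3) * (M.ι (aM g 2) *
      (M.ι (aM g 1) * M.ι (aM g 1)) * M.ι (aM g 2)) * M.ι (aM g 3)) * M.ι (aM g 4) := by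
    rw [hUdef, show genY (aM g) 5 =
      aM g 4 * (aM g 3 * (aM g 2 * (aM g 1 * aM g 1) * aM g 2) * aM g 3) * aM g 4 from rfl]
    simp only [map_mul]
  have hbb := braid_w4_y5 (M.ι (aM g 1)) (M.ι (aM g 2)) (M.ι (aM g 3)) (M.ι (aM g 4))
      (hbrM 1 (by omega) (by omega)) (hbrM 2 (by omega) (by omega))
      (hbrM 3 (by omega) (by omega)) (hcmM 1 3 (by omega) (by omega) (by omega))
      (hcmM 1 4 (by omega) (by omega) (by omega)) (hcmM 2 4 (by omega) (by omega) (by omega))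
  have hUV : U * v = v * U := by
    rw [hUexp, hvdef, pow4]
    exact hbb.symm
  have hUDU : U * D * U⁻¹ = D⁻¹ * v := by
    calc U*D*U⁻¹ = D⁻¹ * (D * (U*D*U⁻¹)) := by group
      _ = D⁻¹ * v := by rw [hBM]
  set z := v * (D*D)⁻¹ with hzdef
  have hzD : z * D = D * z := by
    have e1 : z * D = v * D⁻¹ := by rw [hzdef]; group
    have e2 : D * z = v * D⁻¹ := by
      calc D * z = (D*v) * (D*D)⁻¹ := by rw [hzdef]; group
        _ = (v*D) * (D*D)⁻¹ := by rw [hDV]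
        _ = v * D⁻¹ := by group
    exact e1.trans e2.symm
  have hUvU : U * v * U⁻¹ = v := by rw [hUV]; group
  have hUDinv : U * D⁻¹ * U⁻¹ = v⁻¹ * D := by
    calc U*D⁻¹*U⁻¹ = (U*D*U⁻¹)⁻¹ := by group
      _ = (D⁻¹*v)⁻¹ := by rw [hUDU]
      _ = v⁻¹*D := by group
  have hvinvD : v⁻¹ * D = D * v⁻¹ := by
    calc v⁻¹*D = v⁻¹*(D*v)*v⁻¹ := by group
      _ = v⁻¹*(v*D)*v⁻¹ := by rw [hDV]
      _ = D*v⁻¹ := by group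
  have hU2D : (U*U)*D = D*(U*U) := by
    have hconj : (U*U)*D*(U*U)⁻¹ = D := by
      calc (U*U)*D*(U*U)⁻¹ = U*(U*D*U⁻¹)*U⁻¹ := by group
        _ = U*(D⁻¹*v)*U⁻¹ := by rw [hUDU]
        _ = (U*D⁻¹*U⁻¹)*(U*v*U⁻¹) := by group
        _ = (v⁻¹*D)*v := by rw [hUDinv, hUvU]
        _ = v⁻¹*(D*v) := by group
        _ = v⁻¹*(v*D) := by rw [hDV]
        _ = D := by group
    calc (U*U)*D = ((U*U)*D*(U*U)⁻¹)*(U*U) := by group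
      _ = D*(U*U) := by rw [hconj]
  have hUz : U * z * U⁻¹ = z⁻¹ := by
    calc U*z*U⁻¹ = (U*v*U⁻¹) * ((U*D⁻¹*U⁻¹) * (U*D⁻¹*U⁻¹)) := by rw [hzdef]; group
      _ = v * ((v⁻¹*D) * (v⁻¹*D)) := by rw [hUvU, hUDinv]
      _ = D*(v⁻¹*D) := by group
      _ = D*(D*v⁻¹) := by rw [hvinvD]
      _ = z⁻¹ := by rw [hzdef, mul_inv_rev, inv_inv, mul_assoc]
  have hAcommz : ∀ k : ℕ, 5 ≤ k → k ≤ 2*g → M.ι (aM g k) * z = z * M.ι (aM g k) := by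
    intro k h5 hk
    have c1 : Commute (M.ι (aM g k)) (M.ι (aM g 1)) :=
      (hcmM 1 k (by omega) hk (by omega)).symm
    have c2 : Commute (M.ι (aM g k)) (M.ι (aM g 2)) :=
      (hcmM 2 k (by omega) hk (by omega)).symm
    have c3 : Commute (M.ι (aM g k)) (M.ι (aM g 3)) :=
      (hcmM 3 k (by omega) hk (by omega)).symm
    have cv : Commute (M.ι (aM g k)) v := by
      rw [hvdef]
      exact ((c1.mul_right c2).mul_right c3).pow_right 4
    have cD : Commute (M.ι (aM g k)) D := (hdcM k (by omega) hk (by omega)).symm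
    have : Commute (M.ι (aM g k)) (v * (D*D)⁻¹) := cv.mul_right ((cD.mul_right cD).inv_right)
    rw [hzdef]
    exact this
  -- the key induction on y_k for k ≥ 5
  have hmain : ∀ k : ℕ, 5 ≤ k → k ≤ 2*g →
      (∀ t : Z.R, M.ι (genY (aM g) k) * Z.pow D t * (M.ι (genY (aM g) k))⁻¹ =
        Z.pow z t * Z.pow D t) ∧
      (M.ι (genY (aM g) k) * z * (M.ι (genY (aM g) k))⁻¹ = z⁻¹) := by
    intro k hk5
    induction k, hk5 using Nat.le_induction with
    | base =>
      intro _
      rw [← hUdef]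
      constructor
      · intro t
        have h := Z.pow_conj_aux U D v hUDU hDV t
        rw [← hzdef] at h
        exact h
      · exact hUz
    | succ k hk5 ih =>
      intro hk1
      have hk2g : k ≤ 2*g := by omega
      obtain ⟨ih1, ih2⟩ := ih hk2g
      have hYk1 : M.ι (genY (aM g) (k+1)) =
          M.ι (aM g k) * M.ι (genY (aM g) k) * M.ι (aM g k) := by
        rw [genY_succ_of_le (aM g) k (by omega), map_mul, map_mul]
      have hAz := hAcommz k (by omega) hk2g
      have hADt : ∀ t : Z.R, M.ι (aM g k) * Z.pow D t = Z.pow D t * M.ι (aM g k) := fun t =>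
        (Z.pow_comm_left D (M.ι (aM g k)) (hdcM k (by omega) hk2g (by omega)) t).symm
      have hAzt : ∀ t : Z.R, M.ι (aM g k) * Z.pow z t = Z.pow z t * M.ι (aM g k) := fun t =>
        (Z.pow_comm_left z (M.ι (aM g k)) hAz.symm t).symm
      have hAzinv : M.ι (aM g k) * z⁻¹ = z⁻¹ * M.ι (aM g k) := by
        calc M.ι (aM g k) * z⁻¹ = z⁻¹*(z*M.ι (aM g k))*z⁻¹ := by group
          _ = z⁻¹*(M.ι (aM g k)*z)*z⁻¹ := by rw [hAz]
          _ = z⁻¹*M.ι (aM g k) := by group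
      rw [hYk1]
      constructor
      · intro t
        calc (M.ι (aM g k) * M.ι (genY (aM g) k) * M.ι (aM g k)) * Z.pow D t *
              (M.ι (aM g k) * M.ι (genY (aM g) k) * M.ι (aM g k))⁻¹
            = M.ι (aM g k) * (M.ι (genY (aM g) k) * ((M.ι (aM g k) * Z.pow D t) *
                (M.ι (aM g k))⁻¹) * (M.ι (genY (aM g) k))⁻¹) * (M.ι (aM g k))⁻¹ := by group
          _ = M.ι (aM g k) * (M.ι (genY (aM g) k) * ((Z.pow D t * M.ι (aM g k)) *
                (M.ι (aM g k))⁻¹) * (M.ι (genY (aM g) k))⁻¹) * (M.ι (aM g k))⁻¹ := by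
              rw [hADt t]
          _ = M.ι (aM g k) * (M.ι (genY (aM g) k) * Z.pow D t *
                (M.ι (genY (aM g) k))⁻¹) * (M.ι (aM g k))⁻¹ := by group
          _ = M.ι (aM g k) * (Z.pow z t * Z.pow D t) * (M.ι (aM g k))⁻¹ := by rw [ih1 t]
          _ = (M.ι (aM g k) * Z.pow z t) * Z.pow D t * (M.ι (aM g k))⁻¹ := by group
          _ = (Z.pow z t * M.ι (aM g k)) * Z.pow D t * (M.ι (aM g k))⁻¹ := by rw [hAzt t]
          _ = Z.pow z t * (M.ι (aM g k) * Z.pow D t) * (M.ι (aM g k))⁻¹ := by group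
          _ = Z.pow z t * (Z.pow D t * M.ι (aM g k)) * (M.ι (aM g k))⁻¹ := by rw [hADt t]
          _ = Z.pow z t * Z.pow D t := by group
      · calc (M.ι (aM g k) * M.ι (genY (aM g) k) * M.ι (aM g k)) * z *
              (M.ι (aM g k) * M.ι (genY (aM g) k) * M.ι (aM g k))⁻¹
            = M.ι (aM g k) * (M.ι (genY (aM g) k) * ((M.ι (aM g k) * z) *
                (M.ι (aM g k))⁻¹) * (M.ι (genY (aM g) k))⁻¹) * (M.ι (aM g k))⁻¹ := by group
          _ = M.ι (aM g k) * (M.ι (genY (aM g) k) * ((z * M.ι (aM g k)) *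
                (M.ι (aM g k))⁻¹) * (M.ι (genY (aM g) k))⁻¹) * (M.ι (aM g k))⁻¹ := by rw [hAz]
          _ = M.ι (aM g k) * (M.ι (genY (aM g) k) * z *
                (M.ι (genY (aM g) k))⁻¹) * (M.ι (aM g k))⁻¹ := by group
          _ = M.ι (aM g k) * z⁻¹ * (M.ι (aM g k))⁻¹ := by rw [ih2]
          _ = z⁻¹ * M.ι (aM g k) * (M.ι (aM g k))⁻¹ := by rw [hAzinv]
          _ = z⁻¹ := by group
  refine ⟨?_, ?_, ?_⟩
  · -- part (i)
    have hl : l = 2*m + 1 := by rw [← hm]; ring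
    have hPU : Z.pow U l = Z.pow (U*U) m * U := by
      rw [hl, Z.zpow_add, Z.pow_two_mul, Z.zpow_one]
    have hUUv : (U*U) * v = v * (U*U) := by
      calc (U*U)*v = U*(U*v) := by group
        _ = U*(v*U) := by rw [hUV]
        _ = (U*v)*U := by group
        _ = (v*U)*U := by rw [hUV]
        _ = v*(U*U) := by group
    have hUUz : (U*U) * z = z * (U*U) := by
      have cUUv : Commute (U*U) v := hUUv
      have cUUD : Commute (U*U) D := hU2D
      have : Commute (U*U) (v * (D*D)⁻¹) := cUUv.mul_right ((cUUD.mul_right cUUD).inv_right)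
      rw [hzdef]; exact this
    have hUUz_pows : Z.pow (U*U) m * Z.pow z l = Z.pow z l * Z.pow (U*U) m :=
      Z.pow_pow_comm (U*U) z hUUz m l
    have hUUD_pows : Z.pow (U*U) m * Z.pow D l = Z.pow D l * Z.pow (U*U) m :=
      Z.pow_pow_comm (U*U) D hU2D m l
    have hkeyl : U * Z.pow D l * U⁻¹ = Z.pow z l * Z.pow D l := by
      have h := Z.pow_conj_aux U D v hUDU hDV l
      rw [← hzdef] at h
      exact h
    have hmiddle : Z.pow U l * Z.pow D l * Z.pow U (-l) = Z.pow z l * Z.pow D l := by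
      rw [Z.zpow_neg U l, hPU]
      calc (Z.pow (U*U) m * U) * Z.pow D l * (Z.pow (U*U) m * U)⁻¹
          = Z.pow (U*U) m * (U * Z.pow D l * U⁻¹) * (Z.pow (U*U) m)⁻¹ := by group
        _ = Z.pow (U*U) m * (Z.pow z l * Z.pow D l) * (Z.pow (U*U) m)⁻¹ := by rw [hkeyl]
        _ = (Z.pow (U*U) m * Z.pow z l) * Z.pow D l * (Z.pow (U*U) m)⁻¹ := by group
        _ = (Z.pow z l * Z.pow (U*U) m) * Z.pow D l * (Z.pow (U*U) m)⁻¹ := by rw [hUUz_pows]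
        _ = Z.pow z l * (Z.pow (U*U) m * Z.pow D l) * (Z.pow (U*U) m)⁻¹ := by group
        _ = Z.pow z l * (Z.pow D l * Z.pow (U*U) m) * (Z.pow (U*U) m)⁻¹ := by rw [hUUD_pows]
        _ = Z.pow z l * Z.pow D l := by group
    have hDz : D * z = z * D := hzD.symm
    have hDzD : (D*z)*D = D*(D*z) := by
      calc (D*z)*D = D*(z*D) := by group
        _ = D*(D*z) := by rw [hzD]
    have hDzDv : (D*z)*D = v := by
      calc (D*z)*D = (D*v)*((D*D)⁻¹*D) := by rw [hzdef]; group
        _ = (v*D)*((D*D)⁻¹*D) := by rw [hDV]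
        _ = v := by group
    have hW : M.ι (genW (aM g) 4) = v := by
      rw [show genW (aM g) 4 = (((1 : Gamma1 g) * aM g 1 * aM g 2 * aM g 3))^4 from rfl, hvdef]
      simp only [map_pow, map_mul, map_one, one_mul]
    calc Z.pow D l * (Z.pow U l * Z.pow D l * Z.pow U (-l))
        = Z.pow D l * (Z.pow z l * Z.pow D l) := by rw [hmiddle]
      _ = (Z.pow D l * Z.pow z l) * Z.pow D l := by group
      _ = Z.pow (D*z) l * Z.pow D l := by rw [← Z.pow_mul_distrib D z hDz l]
      _ = Z.pow ((D*z)*D) l := by rw [← Z.pow_mul_distrib (D*z) D hDzD l]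
      _ = Z.pow v l := by rw [hDzDv]
      _ = Z.pow (M.ι (genW (aM g) 4)) l := by rw [hW]
  · -- part (ii), commutation with a₁
    exact Z.pow_pow_comm D (M.ι (aM g 1)) (hdcM 1 (by omega) (by omega) (by omega)) l l
  · -- part (ii), commutation with F(a_j)
    intro j hj2 hj2g hj4
    rcases Nat.lt_or_ge j 5 with h5 | h5
    · -- j = 2 or j = 3
      have hDA : D * M.ι (aM g j) = M.ι (aM g j) * D := hdcM j (by omega) hj2g hj4
      have hDY : D * M.ι (genY (aM g) j) = M.ι (genY (aM g) j) * D := by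
        have hj23 : j = 2 ∨ j = 3 := by omega
        have hDA1 : D * M.ι (aM g 1) = M.ι (aM g 1) * D := hdcM 1 (by omega) (by omega) (by omega)
        have hDA2 : D * M.ι (aM g 2) = M.ι (aM g 2) * D := hdcM 2 (by omega) (by omega) (by omega)
        rcases hj23 with rfl | rfl
        · rw [show genY (aM g) 2 = aM g 1 * aM g 1 from rfl, map_mul]
          exact (Commute.mul_right (hDA1 : Commute D (M.ι (aM g 1))) hDA1)
        · rw [show genY (aM g) 3 = aM g 2 * (aM g 1 * aM g 1) * aM g 2 from rfl, map_mul, map_mul,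
            map_mul]
          exact Commute.mul_right
            (Commute.mul_right (hDA2 : Commute D (M.ι (aM g 2)))
              (Commute.mul_right (hDA1 : Commute D (M.ι (aM g 1))) hDA1)) hDA2
      have cDA : Commute D (M.ι (aM g j)) := hDA
      have hDAsq : D * (M.ι (aM g j) ^ 2) = (M.ι (aM g j) ^ 2) * D := cDA.pow_right 2
      have hDE1 : D * F2.eval f (M.ι (aM g j) ^ 2) (M.ι (genY (aM g) j)) =
          F2.eval f (M.ι (aM g j) ^ 2) (M.ι (genY (aM g) j)) * D :=
        F2.eval_comm _ _ D hDAsq hDY f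
      have hDE2 : D * F2.eval f (M.ι (genY (aM g) j)) (M.ι (aM g j) ^ 2) =
          F2.eval f (M.ι (genY (aM g) j)) (M.ι (aM g j) ^ 2) * D :=
        F2.eval_comm _ _ D hDY hDAsq f
      have hDP : D * Z.pow (M.ι (aM g j)) l = Z.pow (M.ι (aM g j)) l * D :=
        (Z.pow_comm_left (M.ι (aM g j)) D hDA.symm l).symm
      have hDF : D * (F2.eval f (M.ι (aM g j) ^ 2) (M.ι (genY (aM g) j)) *
          Z.pow (M.ι (aM g j)) l *
          F2.eval f (M.ι (genY (aM g) j)) (M.ι (aM g j) ^ 2)) =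
          (F2.eval f (M.ι (aM g j) ^ 2) (M.ι (genY (aM g) j)) *
          Z.pow (M.ι (aM g j)) l *
          F2.eval f (M.ι (genY (aM g) j)) (M.ι (aM g j) ^ 2)) * D :=
        Commute.mul_right
          (Commute.mul_right (hDE1 : Commute D _) (hDP : Commute D _)) (hDE2 : Commute D _)
      exact Z.pow_comm_left D _ hDF l
    · -- j ≥ 5
      obtain ⟨hbj, hcj⟩ := hmain j h5 hj2g
      have hDA : D * M.ι (aM g j) = M.ι (aM g j) * D := hdcM j (by omega) hj2g hj4
      have hAz : M.ι (aM g j) * z = z * M.ι (aM g j) := hAcommz j h5 hj2g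
      have czA : Commute z (M.ι (aM g j)) := hAz.symm
      have hAsqz : z * (M.ι (aM g j) ^ 2) = (M.ι (aM g j) ^ 2) * z := czA.pow_right 2
      set Q := Z.pow D l with hQdef
      set A := M.ι (aM g j) with hAdef
      set Y := M.ι (genY (aM g) j) with hYdef
      set ζ₀ := Z.pow z (-l) with hζ₀def
      have hQinv : Z.pow D (-l) = Q⁻¹ := by rw [hQdef, Z.zpow_neg]
      have hb' : Y * Q⁻¹ * Y⁻¹ = ζ₀ * Q⁻¹ := by
        have := hbj (-l)
        rw [hQinv] at this
        rw [hζ₀def]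
        exact this
      have hzQ : ζ₀ * Q = Q * ζ₀ := by
        rw [hζ₀def, hQdef]
        exact Z.pow_pow_comm z D hzD (-l) l
      have hconjY : Q * Y * Q⁻¹ = ζ₀ * Y := by
        calc Q*Y*Q⁻¹ = Q*(Y*Q⁻¹*Y⁻¹)*Y := by group
          _ = Q*(ζ₀*Q⁻¹)*Y := by rw [hb']
          _ = (Q*ζ₀)*Q⁻¹*Y := by group
          _ = (ζ₀*Q)*Q⁻¹*Y := by rw [← hzQ]
          _ = ζ₀*Y := by group
      have hQA : Q * A = A * Q := by
        rw [hQdef]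
        exact Z.pow_comm_left D A hDA l
      have hconjAsq : Q * (A^2) * Q⁻¹ = A^2 := by
        have cQA : Commute Q A := hQA
        have h2 : Q * (A^2) = (A^2) * Q := cQA.pow_right 2
        rw [h2]; group
      have hconjPA : Q * Z.pow A l * Q⁻¹ = Z.pow A l := by
        have hc : Q * Z.pow A l = Z.pow A l * Q := by
          rw [hQdef]
          exact Z.pow_pow_comm D A hDA l l
        rw [hc]; group
      have hconjE1 : Q * F2.eval f (A^2) Y * Q⁻¹ = F2.eval f (A^2) (ζ₀*Y) := by
        rw [F2.eval_conj (A^2) Y Q f, hconjAsq, hconjY]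
      have hswap : ∀ b' : M.C, F2.eval f b' (A^2) = (F2.eval f (A^2) b')⁻¹ := fun b' =>
        F2.eval_I f hI (A^2) b'
      have hζK : ζ₀ ∈ Ksub z := by
        rw [hζ₀def]
        exact Z.pow_mem_closure z (-l)
      have hζ : F2.eval f (A^2) (ζ₀*Y) * (F2.eval f (A^2) Y)⁻¹ ∈ Ksub z :=
        eval_diff_mem_Ksub F2 hAsqz hcj hζK f
      have haN : (A^2) ∈ NNsub z := comm_mem_NNsub hAsqz
      have hbN : Y ∈ NNsub z := invert_mem_NNsub hcj
      have hξK : (F2.eval f (A^2) Y)⁻¹ *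
          (F2.eval f (A^2) (ζ₀*Y) * (F2.eval f (A^2) Y)⁻¹) * F2.eval f (A^2) Y ∈ Ksub z :=
        (eval_mem_NNsub F2 haN hbN f).2 _ hζ
      have hξA : (F2.eval f (A^2) Y)⁻¹ *
          (F2.eval f (A^2) (ζ₀*Y) * (F2.eval f (A^2) Y)⁻¹) * F2.eval f (A^2) Y * A =
          A * ((F2.eval f (A^2) Y)⁻¹ *
          (F2.eval f (A^2) (ζ₀*Y) * (F2.eval f (A^2) Y)⁻¹) * F2.eval f (A^2) Y) :=
        Ksub_comm hAz.symm _ hξK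
      have hξX : (F2.eval f (A^2) Y)⁻¹ *
          (F2.eval f (A^2) (ζ₀*Y) * (F2.eval f (A^2) Y)⁻¹) * F2.eval f (A^2) Y * Z.pow A l =
          Z.pow A l * ((F2.eval f (A^2) Y)⁻¹ *
          (F2.eval f (A^2) (ζ₀*Y) * (F2.eval f (A^2) Y)⁻¹) * F2.eval f (A^2) Y) := by
        have h1 : A * ((F2.eval f (A^2) Y)⁻¹ *
            (F2.eval f (A^2) (ζ₀*Y) * (F2.eval f (A^2) Y)⁻¹) * F2.eval f (A^2) Y) =
            ((F2.eval f (A^2) Y)⁻¹ *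
            (F2.eval f (A^2) (ζ₀*Y) * (F2.eval f (A^2) Y)⁻¹) * F2.eval f (A^2) Y) * A :=
          hξA.symm
        exact (Z.pow_comm_left A _ h1 l).symm
      -- the conjugated element equals the original
      have hconjF : Q * (F2.eval f (A^2) Y * Z.pow A l * F2.eval f Y (A^2)) * Q⁻¹ =
          F2.eval f (A^2) Y * Z.pow A l * F2.eval f Y (A^2) := by
        rw [hswap Y]
        have hconjE1' : Q * F2.eval f (A^2) Y * Q⁻¹ = F2.eval f (A^2) (ζ₀*Y) := hconjE1
        calc Q * (F2.eval f (A^2) Y * Z.pow A l * (F2.eval f (A^2) Y)⁻¹) * Q⁻¹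
            = (Q * F2.eval f (A^2) Y * Q⁻¹) * (Q * Z.pow A l * Q⁻¹) *
              (Q * F2.eval f (A^2) Y * Q⁻¹)⁻¹ := by group
          _ = F2.eval f (A^2) (ζ₀*Y) * Z.pow A l * (F2.eval f (A^2) (ζ₀*Y))⁻¹ := by
              rw [hconjE1', hconjPA]
          _ = (F2.eval f (A^2) (ζ₀*Y) * (F2.eval f (A^2) Y)⁻¹) *
              (F2.eval f (A^2) Y * Z.pow A l * (F2.eval f (A^2) Y)⁻¹) *
              (F2.eval f (A^2) (ζ₀*Y) * (F2.eval f (A^2) Y)⁻¹)⁻¹ := by group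
          _ = F2.eval f (A^2) Y * (((F2.eval f (A^2) Y)⁻¹ *
              (F2.eval f (A^2) (ζ₀*Y) * (F2.eval f (A^2) Y)⁻¹) * F2.eval f (A^2) Y) *
              Z.pow A l) * (F2.eval f (A^2) Y)⁻¹ *
              (F2.eval f (A^2) (ζ₀*Y) * (F2.eval f (A^2) Y)⁻¹)⁻¹ := by group
          _ = F2.eval f (A^2) Y * ((Z.pow A l) * ((F2.eval f (A^2) Y)⁻¹ *
              (F2.eval f (A^2) (ζ₀*Y) * (F2.eval f (A^2) Y)⁻¹) * F2.eval f (A^2) Y)) *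
              (F2.eval f (A^2) Y)⁻¹ *
              (F2.eval f (A^2) (ζ₀*Y) * (F2.eval f (A^2) Y)⁻¹)⁻¹ := by rw [hξX]
          _ = F2.eval f (A^2) Y * Z.pow A l * (F2.eval f (A^2) Y)⁻¹ := by group
      show Q * (F2.eval f (A^2) Y * Z.pow A l * F2.eval f Y (A^2)) =
          (F2.eval f (A^2) Y * Z.pow A l * F2.eval f Y (A^2)) * Q
      calc Q * (F2.eval f (A^2) Y * Z.pow A l * F2.eval f Y (A^2))
          = (Q * (F2.eval f (A^2) Y * Z.pow A l * F2.eval f Y (A^2)) * Q⁻¹) * Q := by group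
        _ = (F2.eval f (A^2) Y * Z.pow A l * F2.eval f Y (A^2)) * Q := by rw [hconjF]
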